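/- arXiv:1406.6440 — 2 statements merged into one kernel-verified Lean document; each statement's English description precedes it below -/
import Mathlib

section
/- Let C = (C_1,...,C_n) be a division of a totally ordered n-element set S. The map sending each C-permutation w to its index function I_w^C is an injection from the set of C-permutations to the set of index functions of C. Moreover, this map is a bijection if and only if C is superdiagonal, i.e., |C_1| + ... + |C_i| ≥ i for all i. In particular, the number of C-permutations is at most 1^{|C_1|} 2^{|C_2|} ... n^{|C_n|}, with equality if and only if C is superdiagonal. -/
open scoped Pointwise
open MeasureTheory Nat

namespace MixedEulerian

/-- A division of a finite set `S` into an ordered sequence of blocks,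
with all elements of earlier blocks strictly smaller than those of later blocks. -/
def IsDivision (C : List (Finset ℕ)) (S : Finset ℕ) : Prop :=
  (∀ s ∈ S, ∃ i, i < C.length ∧ s ∈ C.getD i ∅) ∧
  (∀ i, i < C.length → C.getD i ∅ ⊆ S) ∧
  (∀ i j, i < j → j < C.length →
    ∀ s ∈ C.getD i ∅, ∀ t ∈ C.getD j ∅, s < t)

/-- Type A admissibility: `s ∈ C_i` is admissible iff `s = min C₁`, `s = max C_n`,
or `i` is strictly between the first and the last index. (Indices are 0-based.) -/
def AdmissibleA (C : List (Finset ℕ)) (s : ℕ) : Prop :=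
  ∃ i, i < C.length ∧ s ∈ C.getD i ∅ ∧
    ((i = 0 ∧ ∀ t ∈ C.getD 0 ∅, s ≤ t) ∨
     (i = C.length - 1 ∧ ∀ t ∈ C.getD i ∅, t ≤ s) ∨
     (0 < i ∧ i + 1 < C.length))

/-- Type A deletion of `s` from the division `C`. -/
def deleteA (C : List (Finset ℕ)) (s : ℕ) : List (Finset ℕ) :=
  let i := C.findIdx (fun b => decide (s ∈ b))
  let B := C.getD i ∅
  let lo := B.filter (fun t => t < s)
  let hi := B.filter (fun t => s < t)
  if C.length ≤ 1 then []
  else if i = 0 then (hi ∪ C.getD 1 ∅) :: C.drop 2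
  else if i = C.length - 1 then C.take (i - 1) ++ [C.getD (i - 1) ∅ ∪ lo]
  else C.take (i - 1) ++ [C.getD (i - 1) ∅ ∪ lo, hi ∪ C.getD (i + 1) ∅] ++ C.drop (i + 2)

/-- `w` is a (type A) `C`-permutation: each entry is admissible in the division
obtained by deleting the previous entries, and all elements get deleted. -/
def IsCPermA : List (Finset ℕ) → List ℕ → Prop
  | C, [] => ∀ B ∈ C, B = ∅
  | C, s :: w => AdmissibleA C s ∧ IsCPermA (deleteA C s) w

/-- Type B admissibility: `s ∈ C_i` is admissible iff `s = min C₁` or `i ≠ 0`. -/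
def AdmissibleB (C : List (Finset ℕ)) (s : ℕ) : Prop :=
  ∃ i, i < C.length ∧ s ∈ C.getD i ∅ ∧
    ((i = 0 ∧ ∀ t ∈ C.getD 0 ∅, s ≤ t) ∨ i ≠ 0)

/-- Type B deletion of `s` from the division `C`. -/
def deleteB (C : List (Finset ℕ)) (s : ℕ) : List (Finset ℕ) :=
  let i := C.findIdx (fun b => decide (s ∈ b))
  if i = C.length - 1 ∧ 0 < i then
    C.take (i - 1) ++ [C.getD (i - 1) ∅ ∪ ((C.getD i ∅).erase s)]
  else deleteA C s

/-- `w` is a type B `C`-permutation. -/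
def IsCPermB : List (Finset ℕ) → List ℕ → Prop
  | C, [] => ∀ B ∈ C, B = ∅
  | C, s :: w => AdmissibleB C s ∧ IsCPermB (deleteB C s) w

/-- A sequence of elements that can be successively (type A) deleted from `C`. -/
def AdmissibleSeqA : List (Finset ℕ) → List ℕ → Prop
  | _, [] => True
  | C, s :: w => AdmissibleA C s ∧ AdmissibleSeqA (deleteA C s) w

/-- Number of descents of a list: the number of adjacent pairs that decrease. -/
def listDescents {α : Type*} [LinearOrder α] (l : List α) : ℕ :=
  (l.zip l.tail).countP (fun p => decide (p.2 < p.1))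

/-- Eulerian number `A(n,k)`: permutations of `{1,…,n}` with exactly `k-1` descents. -/
def eulerianA (n k : ℕ) : ℕ :=
  (List.range' 1 n).permutations.countP (fun l => decide (listDescents l = k - 1))

/-- `A(m,t;r)`: permutations of `{1,…,m+1}` with `t-1` descents and first entry `r+1`
(declared to be `0` when `t = 0`; it vanishes automatically when `t > m+1`). -/
def eulerianFirst (m t r : ℕ) : ℕ :=
  if t = 0 then 0 else
    (List.range' 1 (m + 1)).permutations.countP
      (fun l => decide (listDescents l = t - 1 ∧ l.headI = r + 1))

/-- The index of `t` in the `C`-permutation `w`: the (1-based) position of the block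
containing `t` just before `t` is deleted. -/
def indexFn (C : List (Finset ℕ)) : List ℕ → ℕ → ℕ
  | [], _ => 0
  | s :: w, t =>
      if t = s then C.findIdx (fun b => decide (t ∈ b)) + 1
      else indexFn (deleteA C s) w t

/-- An index function of `C`: any function sending each element of `C_i` into `{1,…,i}`
(1-based). -/
def IsIndexFn (C : List (Finset ℕ)) (I : ℕ → ℕ) : Prop :=
  ∀ i, i < C.length → ∀ s ∈ C.getD i ∅, 1 ≤ I s ∧ I s ≤ i + 1

/-- `C` is superdiagonal: `|C₁| + ⋯ + |C_i| ≥ i` for all `i`. -/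
def Superdiagonal (C : List (Finset ℕ)) : Prop :=
  ∀ i, i ≤ C.length → i ≤ ∑ j ∈ Finset.range i, (C.getD j ∅).card

/-- `C` is subdiagonal: `|C_n| + ⋯ + |C_{n-i+1}| ≥ i` for all `i`. -/
def Subdiagonal (C : List (Finset ℕ)) : Prop :=
  ∀ i, i ≤ C.length → i ≤ ∑ j ∈ Finset.range i, (C.getD (C.length - 1 - j) ∅).card

/-- The canonical division of `{1,…,c.sum}` with block sizes given by `c`. -/
def divisionOf (c : List ℕ) : List (Finset ℕ) :=
  (List.range c.length).map (fun i => Finset.Ioc ((c.take i).sum) ((c.take (i + 1)).sum))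

/-- The number of `C`-permutations for a division with block sizes `c`. -/
noncomputable def NPerm (c : List ℕ) : ℕ :=
  Nat.card {w : List ℕ // IsCPermA (divisionOf c) w}

/-- The division of `{1,…,n}` with all elements in (1-based) position `k`. -/
def midDivision (n k : ℕ) : List (Finset ℕ) :=
  List.replicate (k - 1) ∅ ++ [Finset.Icc 1 n] ++ List.replicate (n - k) ∅

/-- The hypersimplex `Δ_{k,n} ⊆ ℝ^{n+1}`. -/
def hypersimplex (n k : ℕ) : Set (Fin (n + 1) → ℝ) :=
  convexHull ℝ {x | ∃ T : Finset (Fin (n + 1)), T.card = k ∧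
    x = fun i => if i ∈ T then (1 : ℝ) else 0}

/-- The permutohedron `P(y₁,…,y_m) ⊆ ℝ^m`. -/
def permutohedron {m : ℕ} (y : Fin m → ℝ) : Set (Fin m → ℝ) :=
  convexHull ℝ {x | ∃ w : Equiv.Perm (Fin m), x = y ∘ w}

/-- The polytope `Γ_{k,n} ⊆ ℝ^n`, the convex hull of all `±e_{i₁} ± ⋯ ± e_{i_k}`. -/
def gammaPolytope (n k : ℕ) : Set (Fin n → ℝ) :=
  convexHull ℝ {x | ∃ T : Finset (Fin n), T.card = k ∧ ∃ ε : Fin n → ℝ,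
    (∀ i, ε i = 1 ∨ ε i = -1) ∧ x = fun i => if i ∈ T then ε i else 0}

/-- The signed permutohedron `SP(y₁,…,y_n) ⊆ ℝ^n`. -/
def signedPermutohedron {m : ℕ} (y : Fin m → ℝ) : Set (Fin m → ℝ) :=
  convexHull ℝ {x | ∃ w : Equiv.Perm (Fin m), ∃ ε : Fin m → ℝ,
    (∀ i, ε i = 1 ∨ ε i = -1) ∧ x = fun i => ε i * y (w i)}


def pos (C : List (Finset ℕ)) (s : ℕ) : ℕ := C.findIdx (fun b => decide (s ∈ b))

lemma pos_spec {C : List (Finset ℕ)} {s : ℕ} (h : ∃ i, i < C.length ∧ s ∈ C.getD i ∅) :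
    pos C s < C.length ∧ s ∈ C.getD (pos C s) ∅ := by
  obtain ⟨i, hi, hm⟩ := h
  have hm' : s ∈ C[i] := by rwa [List.getD_eq_getElem _ _ hi] at hm
  have hex : ∃ b ∈ C, (fun b => decide (s ∈ b)) b = true := ⟨C[i], List.getElem_mem hi, by simpa⟩
  have hlt : pos C s < C.length := List.findIdx_lt_length_of_exists hex
  refine ⟨hlt, ?_⟩
  have := List.findIdx_getElem (w := hlt)
  rw [List.getD_eq_getElem _ _ hlt]
  exact of_decide_eq_true this

lemma mem_unique {C : List (Finset ℕ)} {S : Finset ℕ} (hC : IsDivision C S) {s : ℕ} {i j : ℕ}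
    (hi : i < C.length) (hmi : s ∈ C.getD i ∅) (hj : j < C.length) (hmj : s ∈ C.getD j ∅) :
    i = j := by
  rcases lt_trichotomy i j with h | h | h
  · exact absurd (hC.2.2 i j h hj s hmi s hmj) (lt_irrefl s)
  · exact h
  · exact absurd (hC.2.2 j i h hi s hmj s hmi) (lt_irrefl s)

lemma pos_eq_of_mem {C : List (Finset ℕ)} {S : Finset ℕ} (hC : IsDivision C S) {s : ℕ} {i : ℕ}
    (hi : i < C.length) (hm : s ∈ C.getD i ∅) : pos C s = i := by
  have h := pos_spec ⟨i, hi, hm⟩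
  exact mem_unique hC h.1 h.2 hi hm

lemma mem_S_of_pos {C : List (Finset ℕ)} {S : Finset ℕ} (hC : IsDivision C S) {s : ℕ}
    (h : ∃ i, i < C.length ∧ s ∈ C.getD i ∅) : s ∈ S := by
  obtain ⟨i, hi, hm⟩ := h
  exact hC.2.1 i hi hm


-- helper getD lemmas
lemma getD_take' {α} (C : List α) (d : α) {m k : ℕ} (h : k < m) :
    (C.take m).getD k d = C.getD k d := by
  rw [List.getD_eq_getElem?_getD, List.getD_eq_getElem?_getD, List.getElem?_take, if_pos h]

lemma getD_drop' {α} (C : List α) (d : α) (m k : ℕ) :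
    (C.drop m).getD k d = C.getD (m + k) d := by
  rw [List.getD_eq_getElem?_getD, List.getD_eq_getElem?_getD, List.getElem?_drop]

lemma getD_append_left' {α} {l₁ l₂ : List α} (d : α) {k : ℕ} (h : k < l₁.length) :
    (l₁ ++ l₂).getD k d = l₁.getD k d := by
  rw [List.getD_eq_getElem?_getD, List.getD_eq_getElem?_getD, List.getElem?_append_left h]

lemma getD_append_right' {α} {l₁ l₂ : List α} (d : α) {k : ℕ} (h : l₁.length ≤ k) :
    (l₁ ++ l₂).getD k d = l₂.getD (k - l₁.length) d := by
  rw [List.getD_eq_getElem?_getD, List.getD_eq_getElem?_getD, List.getElem?_append_right h]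

/-- the new position of an element of block `i` after deleting `s` (in block `j`). -/
def phi (s j i t : ℕ) : ℕ :=
  if i < j then i else if i = j then (if t < s then j - 1 else j) else i - 1

lemma filter_lt_eq_erase {s : Finset ℕ} {a : ℕ} (hmin : ∀ t ∈ s, a ≤ t) :
    s.filter (fun t => a < t) = s.erase a := by
  ext t; simp only [Finset.mem_filter, Finset.mem_erase]
  constructor
  · rintro ⟨ht, h2⟩; exact ⟨by omega, ht⟩
  · rintro ⟨h1, ht⟩; exact ⟨ht, lt_of_le_of_ne (hmin t ht) (Ne.symm h1)⟩

lemma filter_gt_eq_erase {s : Finset ℕ} {a : ℕ} (hmax : ∀ t ∈ s, t ≤ a) :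
    s.filter (fun t => t < a) = s.erase a := by
  ext t; simp only [Finset.mem_filter, Finset.mem_erase]
  constructor
  · rintro ⟨ht, h2⟩; exact ⟨by omega, ht⟩
  · rintro ⟨h1, ht⟩; exact ⟨ht, lt_of_le_of_ne (hmax t ht) h1⟩

theorem deleteA_master {C : List (Finset ℕ)} {S : Finset ℕ} {s : ℕ}
    (hC : IsDivision C S) (hadm : AdmissibleA C s) :
    (deleteA C s).length = C.length - 1 ∧
    ∀ t k, k < C.length - 1 →
      (t ∈ (deleteA C s).getD k ∅ ↔
        t ∈ S ∧ t ≠ s ∧ phi s (pos C s) (pos C t) t = k) := by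
  obtain ⟨i0, hi0, hm0, hcl⟩ := hadm
  have hj0 : pos C s = i0 := pos_eq_of_mem hC hi0 hm0
  set n := C.length with hn
  set j := pos C s with hjdef
  have hjn : j < n := hj0 ▸ hi0
  have hjm : s ∈ C.getD j ∅ := hj0 ▸ hm0
  have hsS : s ∈ S := hC.2.1 j hjn hjm
  have hfind : C.findIdx (fun b => decide (s ∈ b)) = j := rfl
  -- uniqueness of membership
  have huniq : ∀ t i, i < n → t ∈ C.getD i ∅ → pos C t = i := fun t i hi hm =>
    pos_eq_of_mem hC hi hm
  have hposmem : ∀ t ∈ S, pos C t < n ∧ t ∈ C.getD (pos C t) ∅ := fun t ht =>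
    pos_spec (hC.1 t ht)
  rcases le_or_gt n 1 with h1 | h1
  · -- trivial case : deleteA = []
    have hD : deleteA C s = [] := by unfold deleteA; rw [if_pos h1]
    refine ⟨by simp [hD]; omega, fun t k hk => ?_⟩
    omega
  rcases Nat.eq_zero_or_pos j with hj | hjpos
  · -- case j = 0 : s is the minimum of C₀
    have hmin : ∀ t ∈ C.getD 0 ∅, s ≤ t := by
      rcases hcl with ⟨_, h⟩ | ⟨h, _⟩ | ⟨h, _⟩
      · exact h
      · omega
      · omega
    have hD : deleteA C s =
        ((C.getD 0 ∅).filter (fun t => s < t) ∪ C.getD 1 ∅) :: C.drop 2 := by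
      unfold deleteA
      rw [hfind, hj, if_neg (by omega), if_pos rfl]
    have hfil : (C.getD 0 ∅).filter (fun t => s < t) = (C.getD 0 ∅).erase s :=
      filter_lt_eq_erase hmin
    constructor
    · rw [hD]; simp; omega
    intro t k hk
    rw [hD]
    rcases Nat.eq_zero_or_pos k with hk0 | hkpos
    · subst hk0
      rw [List.getD_cons_zero, Finset.mem_union, hfil, Finset.mem_erase]
      constructor
      · rintro (⟨hts, htm⟩ | htm)
        · have hp := huniq t 0 (by omega) htm
          refine ⟨hC.2.1 0 (by omega) htm, hts, ?_⟩
          rw [hp, phi]; simp [hj]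
        · have hp := huniq t 1 (by omega) htm
          have htS := hC.2.1 1 (by omega) htm
          have hts : t ≠ s := by
            intro h; subst h
            have := mem_unique hC (by omega : (1:ℕ) < n) htm hjn hjm
            omega
          refine ⟨htS, hts, ?_⟩
          rw [hp, phi]; simp [hj]
      · rintro ⟨htS, hts, hphi⟩
        obtain ⟨hpn, hpm⟩ := hposmem t htS
        rw [phi, hj] at hphi
        simp only [Nat.not_lt_zero, if_false] at hphi
        by_cases hp0 : pos C t = 0
        · left
          rw [hp0] at hpm
          exact ⟨hts, hpm⟩
        · right
          have : pos C t - 1 = 0 := by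
            rw [if_neg hp0] at hphi; exact hphi
          have : pos C t = 1 := by omega
          rwa [this] at hpm
    · obtain ⟨k', rfl⟩ : ∃ k', k = k' + 1 := ⟨k - 1, by omega⟩
      rw [List.getD_cons_succ, getD_drop']
      constructor
      · intro htm
        have hklt : 2 + k' < n := by omega
        have hp := huniq t _ hklt htm
        have htS := hC.2.1 _ hklt htm
        have hts : t ≠ s := by
          intro h; subst h
          have := mem_unique hC hklt htm hjn hjm
          omega
        refine ⟨htS, hts, ?_⟩
        rw [hp, phi, hj]
        simp only [Nat.not_lt_zero, if_false]
        rw [if_neg (by omega)]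
        omega
      · rintro ⟨htS, hts, hphi⟩
        obtain ⟨hpn, hpm⟩ := hposmem t htS
        rw [phi, hj] at hphi
        simp only [Nat.not_lt_zero, if_false] at hphi
        by_cases hp0 : pos C t = 0
        · rw [if_pos hp0] at hphi
          split at hphi <;> omega
        · rw [if_neg hp0] at hphi
          have : pos C t = 2 + k' := by omega
          rwa [this] at hpm
  rcases Nat.lt_or_ge (j+1) n with hmid | hlast
  · -- middle case : 0 < j, j + 1 < n
    have hD : deleteA C s =
        C.take (j-1) ++ [C.getD (j-1) ∅ ∪ (C.getD j ∅).filter (fun t => t < s),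
          (C.getD j ∅).filter (fun t => s < t) ∪ C.getD (j+1) ∅] ++ C.drop (j+2) := by
      unfold deleteA
      rw [hfind, if_neg (by omega), if_neg (by omega), if_neg (by omega)]
    have hlen1 : (C.take (j-1)).length = j - 1 := by simp; omega
    have hlenmid : (C.take (j-1) ++ [C.getD (j-1) ∅ ∪ (C.getD j ∅).filter (fun t => t < s),
          (C.getD j ∅).filter (fun t => s < t) ∪ C.getD (j+1) ∅]).length = j + 1 := by
      simp; omega
    constructor
    · rw [hD]; simp; omega
    intro t k hk
    have key : (deleteA C s).getD k ∅ =
        if k < j - 1 then C.getD k ∅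
        else if k = j - 1 then C.getD (j-1) ∅ ∪ (C.getD j ∅).filter (fun t => t < s)
        else if k = j then (C.getD j ∅).filter (fun t => s < t) ∪ C.getD (j+1) ∅
        else C.getD (k+1) ∅ := by
      rw [hD]
      rcases Nat.lt_or_ge k (j-1) with h | h
      · rw [List.append_assoc, getD_append_left' _ (by omega : k < (C.take (j-1)).length),
          getD_take' _ _ h, if_pos h]
      rcases Nat.eq_or_lt_of_le h with h' | h'
      · rw [List.append_assoc, getD_append_right' _ (by omega : (C.take (j-1)).length ≤ k)]
        rw [hlen1, ← h', Nat.sub_self, if_neg (by omega), if_pos rfl]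
        rfl
      rcases Nat.eq_or_lt_of_le (by omega : j ≤ k) with h'' | h''
      · rw [List.append_assoc, getD_append_right' _ (by omega : (C.take (j-1)).length ≤ k)]
        rw [hlen1, ← h'', if_neg (by omega), if_neg (by omega), if_pos rfl]
        have : j - (j-1) = 1 := by omega
        rw [this]
        rfl
      · rw [getD_append_right' _ (by rw [hlenmid]; omega), hlenmid, getD_drop',
          if_neg (by omega), if_neg (by omega), if_neg (by omega)]
        congr 1
        omega
    rw [key]
    -- now the four subcases
    rcases Nat.lt_or_ge k (j-1) with h | h
    · rw [if_pos h]
      constructor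
      · intro htm
        have hkn : k < n := by omega
        have hp := huniq t _ hkn htm
        refine ⟨hC.2.1 _ hkn htm, ?_, ?_⟩
        · intro he; subst he; have := mem_unique hC hkn htm hjn hjm; omega
        · rw [hp, phi, if_pos (by omega)]
      · rintro ⟨htS, hts, hphi⟩
        obtain ⟨hpn, hpm⟩ := hposmem t htS
        rw [phi] at hphi
        split at hphi
        · subst hphi; exact hpm
        · split at hphi
          · split at hphi <;> omega
          · have : pos C t = k + 1 := by omega
            omega
    rcases Nat.eq_or_lt_of_le h with h' | h'
    · rw [if_neg (by omega), if_pos h'.symm, Finset.mem_union, Finset.mem_filter]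
      constructor
      · rintro (htm | ⟨htm, hlt⟩)
        · have hkn : j - 1 < n := by omega
          have hp := huniq t _ hkn htm
          refine ⟨hC.2.1 _ hkn htm, ?_, ?_⟩
          · intro he; subst he; have := mem_unique hC hkn htm hjn hjm; omega
          · rw [hp, phi, if_pos (by omega)]; omega
        · have hp := huniq t _ hjn htm
          refine ⟨hC.2.1 _ hjn htm, by omega, ?_⟩
          rw [hp, phi, if_neg (by omega), if_pos rfl, if_pos hlt]; omega
      · rintro ⟨htS, hts, hphi⟩
        obtain ⟨hpn, hpm⟩ := hposmem t htS
        rcases Nat.lt_trichotomy (pos C t) j with hcmp | hcmp | hcmp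
        · rw [phi, if_pos hcmp] at hphi
          left; have hx : pos C t = j - 1 := by omega
          rwa [hx] at hpm
        · by_cases hls : t < s
          · rw [phi, if_neg (by omega), if_pos hcmp, if_pos hls] at hphi
            right; rw [hcmp] at hpm; exact ⟨hpm, hls⟩
          · rw [phi, if_neg (by omega), if_pos hcmp, if_neg hls] at hphi
            omega
        · rw [phi, if_neg (by omega), if_neg (by omega)] at hphi
          omega
    rcases Nat.eq_or_lt_of_le (by omega : j ≤ k) with h'' | h''
    · rw [if_neg (by omega), if_neg (by omega), if_pos h''.symm, Finset.mem_union,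
        Finset.mem_filter]
      constructor
      · rintro (⟨htm, hlt⟩ | htm)
        · have hp := huniq t _ hjn htm
          refine ⟨hC.2.1 _ hjn htm, by omega, ?_⟩
          rw [hp, phi, if_neg (by omega), if_pos rfl, if_neg (by omega)]; omega
        · have hkn : j + 1 < n := by omega
          have hp := huniq t _ hkn htm
          refine ⟨hC.2.1 _ hkn htm, ?_, ?_⟩
          · intro he; subst he; have := mem_unique hC hkn htm hjn hjm; omega
          · rw [hp, phi, if_neg (by omega), if_neg (by omega)]; omega
      · rintro ⟨htS, hts, hphi⟩
        obtain ⟨hpn, hpm⟩ := hposmem t htS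
        rcases Nat.lt_trichotomy (pos C t) j with hcmp | hcmp | hcmp
        · rw [phi, if_pos hcmp] at hphi
          omega
        · by_cases hls : t < s
          · rw [phi, if_neg (by omega), if_pos hcmp, if_pos hls] at hphi
            omega
          · rw [phi, if_neg (by omega), if_pos hcmp, if_neg hls] at hphi
            left; rw [hcmp] at hpm
            exact ⟨hpm, by omega⟩
        · rw [phi, if_neg (by omega), if_neg (by omega)] at hphi
          right; have : pos C t = j + 1 := by omega
          rwa [this] at hpm
    · rw [if_neg (by omega), if_neg (by omega), if_neg (by omega)]
      constructor
      · intro htm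
        have hkn : k + 1 < n := by omega
        have hp := huniq t _ hkn htm
        refine ⟨hC.2.1 _ hkn htm, ?_, ?_⟩
        · intro he; subst he; have := mem_unique hC hkn htm hjn hjm; omega
        · rw [hp, phi, if_neg (by omega), if_neg (by omega)]; omega
      · rintro ⟨htS, hts, hphi⟩
        obtain ⟨hpn, hpm⟩ := hposmem t htS
        rw [phi] at hphi
        split at hphi
        · omega
        · split at hphi
          · split at hphi <;> omega
          · have : pos C t = k + 1 := by omega
            rwa [this] at hpm
  · -- last case : j = n - 1, 0 < j
    have hjval : j = n - 1 := by omega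
    have hmax : ∀ t ∈ C.getD j ∅, t ≤ s := by
      rcases hcl with ⟨h, _⟩ | ⟨_, h⟩ | ⟨_, h⟩
      · omega
      · rwa [hj0]
      · omega
    have hD : deleteA C s =
        C.take (j-1) ++ [C.getD (j-1) ∅ ∪ (C.getD j ∅).filter (fun t => t < s)] := by
      unfold deleteA
      rw [hfind, if_neg (by omega), if_neg (by omega), if_pos (by omega)]
    have hfil : (C.getD j ∅).filter (fun t => t < s) = (C.getD j ∅).erase s :=
      filter_gt_eq_erase hmax
    constructor
    · rw [hD]; simp; omega
    intro t k hk
    have key : (deleteA C s).getD k ∅ =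
        if k < j - 1 then C.getD k ∅
        else C.getD (j-1) ∅ ∪ (C.getD j ∅).filter (fun t => t < s) := by
      rw [hD]
      rcases Nat.lt_or_ge k (j-1) with h | h
      · rw [getD_append_left' _ (by simp; omega), getD_take' _ _ h, if_pos h]
      · have hkj : k = j - 1 := by omega
        rw [getD_append_right' _ (by simp; omega), if_neg (by omega)]
        have : k - (C.take (j-1)).length = 0 := by simp; omega
        rw [this]
        rfl
    rw [key]
    rcases Nat.lt_or_ge k (j-1) with h | h
    · rw [if_pos h]
      constructor
      · intro htm
        have hkn : k < n := by omega
        have hp := huniq t _ hkn htm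
        refine ⟨hC.2.1 _ hkn htm, ?_, ?_⟩
        · intro he; subst he; have := mem_unique hC hkn htm hjn hjm; omega
        · rw [hp, phi, if_pos (by omega)]
      · rintro ⟨htS, hts, hphi⟩
        obtain ⟨hpn, hpm⟩ := hposmem t htS
        rw [phi] at hphi
        split at hphi
        · subst hphi; exact hpm
        · split at hphi
          · split at hphi <;> omega
          · omega
    · have hkj : k = j - 1 := by omega
      rw [if_neg (by omega), Finset.mem_union, hfil, Finset.mem_erase]
      constructor
      · rintro (htm | ⟨hts, htm⟩)
        · have hkn : j - 1 < n := by omega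
          have hp := huniq t _ hkn htm
          refine ⟨hC.2.1 _ hkn htm, ?_, ?_⟩
          · intro he; subst he; have := mem_unique hC hkn htm hjn hjm; omega
          · rw [hp, phi, if_pos (by omega)]; omega
        · have hp := huniq t _ hjn htm
          refine ⟨hC.2.1 _ hjn htm, hts, ?_⟩
          have hlt : t < s := lt_of_le_of_ne (hmax t htm) hts
          rw [hp, phi, if_neg (by omega), if_pos rfl, if_pos hlt]; omega
      · rintro ⟨htS, hts, hphi⟩
        obtain ⟨hpn, hpm⟩ := hposmem t htS
        rcases Nat.lt_trichotomy (pos C t) j with hcmp | hcmp | hcmp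
        · rw [phi, if_pos hcmp] at hphi
          left; have hx : pos C t = j - 1 := by omega
          rwa [hx] at hpm
        · by_cases hls : t < s
          · right; rw [hcmp] at hpm; exact ⟨hts, hpm⟩
          · exfalso
            rw [hcmp] at hpm
            have := hmax t hpm
            exact hts (by omega)
        · omega





lemma phi_le (s j i t : ℕ) : phi s j i t ≤ i := by
  unfold phi; split <;> [omega; split] <;> [split; omega] <;> omega

lemma phi_ge (s j i t : ℕ) : i ≤ phi s j i t + 1 := by
  unfold phi; split <;> [omega; split] <;> [split; omega] <;> omega

lemma phi_of_lt {j i : ℕ} (s t : ℕ) (h : i < j) : phi s j i t = i := by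
  unfold phi; rw [if_pos h]

lemma phi_of_gt {j i : ℕ} (s t : ℕ) (h : j < i) : phi s j i t = i - 1 := by
  unfold phi; rw [if_neg (by omega), if_neg (by omega)]

lemma block_eq_filter {C : List (Finset ℕ)} {S : Finset ℕ} (hC : IsDivision C S)
    {m : ℕ} (hm : m < C.length) :
    C.getD m ∅ = S.filter (fun t => pos C t = m) := by
  ext t
  simp only [Finset.mem_filter]
  constructor
  · intro ht
    exact ⟨hC.2.1 m hm ht, pos_eq_of_mem hC hm ht⟩
  · rintro ⟨htS, hp⟩
    have := (pos_spec (hC.1 t htS)).2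
    rwa [hp] at this

lemma card_filter_pos {C : List (Finset ℕ)} {S : Finset ℕ} (hC : IsDivision C S) :
    ∀ m, m ≤ C.length →
      (S.filter (fun t => pos C t < m)).card = ∑ k ∈ Finset.range m, (C.getD k ∅).card := by
  intro m
  induction m with
  | zero => intro _; simp
  | succ m ih =>
    intro hm
    have h1 : S.filter (fun t => pos C t < m + 1)
        = S.filter (fun t => pos C t < m) ∪ S.filter (fun t => pos C t = m) := by
      rw [← Finset.filter_or]
      apply Finset.filter_congr
      intro t _
      constructor
      · intro h; omega
      · rintro (h | h) <;> omega
    have hdisj : Disjoint (S.filter (fun t => pos C t < m)) (S.filter (fun t => pos C t = m)) := by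
      rw [Finset.disjoint_left]
      intro a ha hb
      simp only [Finset.mem_filter] at ha hb
      omega
    rw [h1, Finset.card_union_of_disjoint hdisj, ih (by omega), Finset.sum_range_succ,
      ← block_eq_filter hC (by omega)]

theorem deleteA_spec {C : List (Finset ℕ)} {S : Finset ℕ} {s : ℕ}
    (hC : IsDivision C S) (hcard : S.card = C.length) (hadm : AdmissibleA C s) :
    IsDivision (deleteA C s) (S.erase s) ∧
    (deleteA C s).length = C.length - 1 ∧
    (S.erase s).card = C.length - 1 ∧
    (∀ t ∈ S.erase s, pos (deleteA C s) t = phi s (pos C s) (pos C t) t) ∧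
    (∀ t ∈ S.erase s, pos (deleteA C s) t ≤ pos C t ∧ pos C t ≤ pos (deleteA C s) t + 1) ∧
    (∀ t ∈ S.erase s,
      (pos (deleteA C s) t = pos C t ↔ pos C t < pos C s ∨
        (pos C t = pos C s ∧ (pos C s = 0 ∨ (pos C s + 1 < C.length ∧ s < t))))) ∧
    (Superdiagonal C → Superdiagonal (deleteA C s)) := by
  obtain ⟨hlen, hmem⟩ := deleteA_master hC hadm
  obtain ⟨i0, hi0, hm0, hcl⟩ := hadm
  have hj0 : pos C s = i0 := pos_eq_of_mem hC hi0 hm0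
  set n := C.length with hn
  set j := pos C s with hjdef
  set D := deleteA C s with hDdef
  have hjn : j < n := hj0 ▸ hi0
  have hjm : s ∈ C.getD j ∅ := hj0 ▸ hm0
  have hsS : s ∈ S := hC.2.1 j hjn hjm
  have hposmem : ∀ t ∈ S, pos C t < n ∧ t ∈ C.getD (pos C t) ∅ := fun t ht =>
    pos_spec (hC.1 t ht)
  have hmin : j = 0 → 1 < n → ∀ t ∈ C.getD 0 ∅, s ≤ t := by
    intro hj hn1
    rcases hcl with ⟨_, h⟩ | ⟨h, _⟩ | ⟨h, _⟩
    · exact h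
    · omega
    · omega
  have hmax : 0 < j → j = n - 1 → ∀ t ∈ C.getD j ∅, t ≤ s := by
    intro hjpos hjval
    rcases hcl with ⟨h, _⟩ | ⟨_, h⟩ | ⟨_, h⟩
    · omega
    · rwa [hj0]
    · omega
  -- basic facts about elements of S.erase s
  have hn2 : ∀ t ∈ S.erase s, 1 < n := by
    intro t ht
    rw [Finset.mem_erase] at ht
    have : 1 < S.card := Finset.one_lt_card.mpr ⟨t, ht.2, s, hsS, ht.1⟩
    omega
  have hphilt : ∀ t ∈ S.erase s, phi s j (pos C t) t < n - 1 := by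
    intro t ht
    have h2 := hn2 t ht
    rw [Finset.mem_erase] at ht
    obtain ⟨hpn, hpm⟩ := hposmem t ht.2
    rcases Nat.lt_trichotomy (pos C t) j with hcmp | hcmp | hcmp
    · rw [phi_of_lt s t hcmp]; omega
    · by_cases hls : t < s
      · unfold phi; rw [if_neg (by omega), if_pos hcmp, if_pos hls]; omega
      · unfold phi; rw [if_neg (by omega), if_pos hcmp, if_neg hls]
        -- need j < n - 1 : else j = n-1 > 0 and s is max, contradiction
        by_contra hcon
        have hjval : j = n - 1 := by omega
        have hjpos : 0 < j := by omega
        have := hmax hjpos hjval t (hcmp ▸ hpm)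
        exact ht.1 (by omega)
    · rw [phi_of_gt s t hcmp]; omega
  have hmem' : ∀ t ∈ S.erase s, t ∈ D.getD (phi s j (pos C t) t) ∅ := by
    intro t ht
    have hlt := hphilt t ht
    rw [Finset.mem_erase] at ht
    exact (hmem t _ hlt).mpr ⟨ht.2, ht.1, rfl⟩
  -- division structure
  have hdiv : IsDivision D (S.erase s) := by
    refine ⟨?_, ?_, ?_⟩
    · intro t ht
      exact ⟨_, by rw [hlen]; exact hphilt t ht, hmem' t ht⟩
    · intro k hk t ht
      rw [hlen] at hk
      obtain ⟨htS, hts, _⟩ := (hmem t k hk).mp ht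
      exact Finset.mem_erase.mpr ⟨hts, htS⟩
    · intro k k' hkk' hk' t ht u hu
      rw [hlen] at hk'
      obtain ⟨htS, hts, hphit⟩ := (hmem t k (by omega)).mp ht
      obtain ⟨huS, hus, hphiu⟩ := (hmem u k' hk').mp hu
      obtain ⟨hpnt, hpmt⟩ := hposmem t htS
      obtain ⟨hpnu, hpmu⟩ := hposmem u huS
      have hb1 := phi_le s j (pos C t) t
      have hb2 := phi_ge s j (pos C t) t
      have hb3 := phi_le s j (pos C u) u
      have hb4 := phi_ge s j (pos C u) u
      rcases Nat.lt_trichotomy (pos C t) (pos C u) with hcmp | hcmp | hcmp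
      · exact hC.2.2 _ _ hcmp hpnu t hpmt u hpmu
      · -- same block; must be block j with t < s < u
        by_cases hcj : pos C t = j
        · by_cases hls : t < s
          · by_cases hls' : u < s
            · exfalso
              unfold phi at hphit hphiu
              rw [if_neg (by omega), if_pos hcj, if_pos hls] at hphit
              rw [if_neg (by omega), if_pos (hcmp ▸ hcj), if_pos hls'] at hphiu
              omega
            · have : s < u := lt_of_le_of_ne (by omega) (Ne.symm hus)
              omega
          · exfalso
            unfold phi at hphit hphiu
            rw [if_neg (by omega), if_pos hcj, if_neg hls] at hphit
            by_cases hls' : u < s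
            · rw [if_neg (by omega), if_pos (hcmp ▸ hcj), if_pos hls'] at hphiu
              omega
            · rw [if_neg (by omega), if_pos (hcmp ▸ hcj), if_neg hls'] at hphiu
              omega
        · exfalso
          unfold phi at hphit hphiu
          by_cases hcl' : pos C t < j
          · rw [if_pos hcl'] at hphit
            rw [if_pos (hcmp ▸ hcl')] at hphiu
            omega
          · rw [if_neg hcl', if_neg hcj] at hphit
            rw [if_neg (hcmp ▸ hcl'), if_neg (hcmp ▸ hcj)] at hphiu
            omega
      · exfalso; omega
  have hposD : ∀ t ∈ S.erase s, pos D t = phi s j (pos C t) t := by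
    intro t ht
    exact pos_eq_of_mem hdiv (by rw [hlen]; exact hphilt t ht) (hmem' t ht)
  refine ⟨hdiv, hlen, ?_, hposD, ?_, ?_, ?_⟩
  · rw [Finset.card_erase_of_mem hsS, hcard]
  · intro t ht
    have h0 := hposD t ht
    have h1 := phi_le s j (pos C t) t
    have h2 := phi_ge s j (pos C t) t
    omega
  · -- iff characterization
    intro t ht
    have hpd := hposD t ht
    have h2n := hn2 t ht
    rw [Finset.mem_erase] at ht
    obtain ⟨hpn, hpm⟩ := hposmem t ht.2
    rcases Nat.lt_trichotomy (pos C t) j with hcmp | hcmp | hcmp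
    · rw [hpd, phi_of_lt s t hcmp]
      exact ⟨fun _ => Or.inl hcmp, fun _ => rfl⟩
    · constructor
      · intro hEq
        rw [hpd] at hEq
        by_cases hls : t < s
        · exfalso
          unfold phi at hEq
          rw [if_neg (by omega), if_pos hcmp, if_pos hls] at hEq
          have hj0' : j = 0 := by omega
          have := hmin hj0' h2n t (by rwa [hcmp, hj0'] at hpm)
          omega
        · right
          have hst : s < t := lt_of_le_of_ne (by omega) (Ne.symm ht.1)
          refine ⟨hcmp, ?_⟩
          by_cases hj0' : j = 0
          · left; exact hj0'
          · right
            refine ⟨?_, hst⟩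
            by_contra hcon
            have hjval : j = n - 1 := by omega
            have := hmax (by omega) hjval t (hcmp ▸ hpm)
            omega
      · rintro (h | ⟨hEq, h⟩)
        · rw [hpd] at *; omega
        · rw [hpd]
          unfold phi
          rcases h with h0 | ⟨_, hst⟩
          · rw [if_neg (by omega), if_pos hcmp]; split <;> omega
          · rw [if_neg (by omega), if_pos hcmp, if_neg (by omega)]; omega
    · constructor
      · intro hEq
        exfalso
        rw [hpd, phi_of_gt s t hcmp] at hEq
        omega
      · rintro (h | ⟨h, _⟩) <;> omega
  · -- superdiagonal transfer
    intro hsd m hm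
    rw [hlen] at hm
    rw [← card_filter_pos hdiv m (by rw [hlen]; exact hm)]
    rcases Nat.lt_or_ge j m with hjm' | hjm'
    · have hsub : (S.filter (fun t => pos C t < m + 1)).erase s ⊆
          (S.erase s).filter (fun t => pos D t < m) := by
        intro t ht
        rw [Finset.mem_erase, Finset.mem_filter] at ht
        obtain ⟨hts, htS, hplt⟩ := ht
        have htm : t ∈ S.erase s := Finset.mem_erase.mpr ⟨hts, htS⟩
        rw [Finset.mem_filter]
        refine ⟨htm, ?_⟩
        rw [hposD t htm]
        have h1 := phi_le s j (pos C t) t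
        rcases Nat.lt_or_ge j (pos C t) with hc | hc
        · rw [phi_of_gt s t hc]; omega
        · omega
      have hcard1 : m + 1 ≤ (S.filter (fun t => pos C t < m + 1)).card := by
        rw [card_filter_pos hC (m+1) (by omega)]
        exact hsd (m+1) (by omega)
      have hsmem : s ∈ S.filter (fun t => pos C t < m + 1) :=
        Finset.mem_filter.mpr ⟨hsS, by omega⟩
      have hle := Finset.card_le_card hsub
      rw [Finset.card_erase_of_mem hsmem] at hle
      omega
    · have hsub : S.filter (fun t => pos C t < m) ⊆
          (S.erase s).filter (fun t => pos D t < m) := by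
        intro t ht
        rw [Finset.mem_filter] at ht
        obtain ⟨htS, hplt⟩ := ht
        have hts : t ≠ s := fun he => by rw [he] at hplt; omega
        have htm : t ∈ S.erase s := Finset.mem_erase.mpr ⟨hts, htS⟩
        rw [Finset.mem_filter]
        refine ⟨htm, ?_⟩
        rw [hposD t htm, phi_of_lt s t (by omega)]
        exact hplt
      have hcard1 : m ≤ (S.filter (fun t => pos C t < m)).card := by
        rw [card_filter_pos hC m (by omega)]
        exact hsd m (by omega)
      have hle := Finset.card_le_card hsub
      omega







lemma isCPermA_cons {C : List (Finset ℕ)} {s : ℕ} {v : List ℕ} :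
    IsCPermA C (s::v) ↔ AdmissibleA C s ∧ IsCPermA (deleteA C s) v := Iff.rfl

lemma indexFn_cons_self (C : List (Finset ℕ)) (s : ℕ) (v : List ℕ) :
    indexFn C (s::v) s = pos C s + 1 := by simp [indexFn, pos]

lemma indexFn_cons_ne (C : List (Finset ℕ)) {s t : ℕ} (v : List ℕ) (h : t ≠ s) :
    indexFn C (s::v) t = indexFn (deleteA C s) v t := by simp [indexFn, h]

lemma S_empty_of_nil {C : List (Finset ℕ)} {S : Finset ℕ} (hC : IsDivision C S)
    (h : IsCPermA C []) : S = ∅ := by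
  rw [Finset.eq_empty_iff_forall_notMem]
  intro t ht
  obtain ⟨i, hi, hm⟩ := hC.1 t ht
  have hB : C.getD i ∅ = ∅ := by
    apply h
    rw [List.getD_eq_getElem _ _ hi]
    exact List.getElem_mem hi
  rw [hB] at hm
  exact absurd hm (Finset.notMem_empty t)

lemma mem_S_of_admissible {C : List (Finset ℕ)} {S : Finset ℕ} {s : ℕ}
    (hC : IsDivision C S) (h : AdmissibleA C s) : s ∈ S := by
  obtain ⟨i, hi, hm, _⟩ := h
  exact hC.2.1 i hi hm

lemma admissible_min' {C : List (Finset ℕ)} {S : Finset ℕ} {s : ℕ} (hC : IsDivision C S)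
    (hadm : AdmissibleA C s) (hj : pos C s = 0) (hn : 1 < C.length) :
    ∀ t ∈ C.getD 0 ∅, s ≤ t := by
  obtain ⟨i0, hi0, hm0, hcl⟩ := hadm
  have : pos C s = i0 := pos_eq_of_mem hC hi0 hm0
  rcases hcl with ⟨_, h⟩ | ⟨h, _⟩ | ⟨h, _⟩
  · exact h
  · omega
  · omega

theorem indexFn_bounds : ∀ (w : List ℕ) (C : List (Finset ℕ)) (S : Finset ℕ),
    IsDivision C S → S.card = C.length → IsCPermA C w →
    ∀ t ∈ S, 1 ≤ indexFn C w t ∧ indexFn C w t ≤ pos C t + 1 := by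
  intro w
  induction w with
  | nil =>
    intro C S hC hcard hperm t ht
    rw [S_empty_of_nil hC hperm] at ht
    exact absurd ht (Finset.notMem_empty t)
  | cons s v ih =>
    intro C S hC hcard hperm t ht
    obtain ⟨hadm, hrec⟩ := isCPermA_cons.mp hperm
    by_cases hts : t = s
    · subst hts
      rw [indexFn_cons_self]
      omega
    · rw [indexFn_cons_ne _ _ hts]
      obtain ⟨hdiv, hlen, hcard', _, h5, _, _⟩ := deleteA_spec hC hcard hadm
      have ht' : t ∈ S.erase s := Finset.mem_erase.mpr ⟨hts, ht⟩
      have := ih (deleteA C s) (S.erase s) hdiv (by omega) hrec t ht'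
      have h5' := h5 t ht'
      omega

theorem indexFn_inj : ∀ (w w' : List ℕ) (C : List (Finset ℕ)) (S : Finset ℕ),
    IsDivision C S → S.card = C.length → IsCPermA C w → IsCPermA C w' →
    (∀ t ∈ S, indexFn C w t = indexFn C w' t) → w = w' := by
  intro w
  induction w with
  | nil =>
    intro w' C S hC hcard hperm hperm' _
    cases w' with
    | nil => rfl
    | cons s' v' =>
      obtain ⟨hadm', _⟩ := isCPermA_cons.mp hperm'
      have := mem_S_of_admissible hC hadm'
      rw [S_empty_of_nil hC hperm] at this
      exact absurd this (Finset.notMem_empty s')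
  | cons s v ih =>
    intro w' C S hC hcard hperm hperm' hagree
    cases w' with
    | nil =>
      obtain ⟨hadm, _⟩ := isCPermA_cons.mp hperm
      have := mem_S_of_admissible hC hadm
      rw [S_empty_of_nil hC hperm'] at this
      exact absurd this (Finset.notMem_empty s)
    | cons s' v' =>
      obtain ⟨hadm, hrec⟩ := isCPermA_cons.mp hperm
      obtain ⟨hadm', hrec'⟩ := isCPermA_cons.mp hperm'
      have hsS := mem_S_of_admissible hC hadm
      have hs'S := mem_S_of_admissible hC hadm'
      have hss : s = s' := by
        by_contra hne
        have hn2 : 1 < C.length := by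
          have : 1 < S.card := Finset.one_lt_card.mpr ⟨s, hsS, s', hs'S, hne⟩
          omega
        obtain ⟨hdiv', hlen', hcard'', hpos', h5', h6', _⟩ := deleteA_spec hC hcard hadm'
        obtain ⟨hdiv, hlen, hcard', hpos, h5, h6, _⟩ := deleteA_spec hC hcard hadm
        have hsmem : s ∈ S.erase s' := Finset.mem_erase.mpr ⟨hne, hsS⟩
        have hs'mem : s' ∈ S.erase s := Finset.mem_erase.mpr ⟨fun h => hne h.symm, hs'S⟩
        have e1 : pos C s + 1 = indexFn (deleteA C s') v' s := by
          have := hagree s hsS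
          rwa [indexFn_cons_self, indexFn_cons_ne _ _ hne] at this
        have e2 : indexFn (deleteA C s') v' s ≤ pos (deleteA C s') s + 1 :=
          (indexFn_bounds v' _ _ hdiv' (by omega) hrec' s hsmem).2
        have e3 := h5' s hsmem
        have heq1 : pos (deleteA C s') s = pos C s := by omega
        have e1' : indexFn (deleteA C s) v s' = pos C s' + 1 := by
          have := hagree s' hs'S
          rw [indexFn_cons_ne _ _ (fun h => hne h.symm), indexFn_cons_self] at this
          exact this
        have e2' : indexFn (deleteA C s) v s' ≤ pos (deleteA C s) s' + 1 :=
          (indexFn_bounds v _ _ hdiv (by omega) hrec s' hs'mem).2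
        have e3' := h5 s' hs'mem
        have heq2 : pos (deleteA C s) s' = pos C s' := by omega
        have c1 := (h6' s hsmem).mp heq1
        have c2 := (h6 s' hs'mem).mp heq2
        rcases c1 with hlt | ⟨heqp, hc1⟩
        · rcases c2 with hlt' | ⟨heqp', _⟩ <;> omega
        · rcases c2 with hlt' | ⟨heqp', hc2⟩
          · omega
          · by_cases hz : pos C s = 0
            · have hz' : pos C s' = 0 := by omega
              have hm1 := admissible_min' hC hadm hz hn2
              have hm2 := admissible_min' hC hadm' hz' hn2
              have hs0 : s ∈ C.getD 0 ∅ := by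
                have := (pos_spec (hC.1 s hsS)).2; rwa [hz] at this
              have hs'0 : s' ∈ C.getD 0 ∅ := by
                have := (pos_spec (hC.1 s' hs'S)).2; rwa [hz'] at this
              have hx1 := hm1 s' hs'0
              have hx2 := hm2 s hs0
              omega
            · have hx1 : s' < s := by
                rcases hc1 with h | ⟨_, h⟩
                · omega
                · exact h
              have hx2 : s < s' := by
                rcases hc2 with h | ⟨_, h⟩
                · omega
                · exact h
              omega
      subst hss
      congr 1
      obtain ⟨hdiv, hlen, hcard', _, _, _, _⟩ := deleteA_spec hC hcard hadm
      apply ih v' (deleteA C s) (S.erase s) hdiv (by omega) hrec hrec'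
      intro t ht
      have hts : t ≠ s := (Finset.mem_erase.mp ht).1
      have := hagree t (Finset.mem_of_mem_erase ht)
      rwa [indexFn_cons_ne _ _ hts, indexFn_cons_ne _ _ hts] at this

theorem index_count : ∀ (w : List ℕ) (C : List (Finset ℕ)) (S : Finset ℕ),
    IsDivision C S → S.card = C.length → IsCPermA C w →
    ∀ m, m ≤ C.length → m ≤ (S.filter (fun t => indexFn C w t ≤ m)).card := by
  intro w
  induction w with
  | nil =>
    intro C S hC hcard hperm m hm
    have hS := S_empty_of_nil hC hperm
    rw [hS] at hcard
    simp at hcard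
    omega
  | cons s v ih =>
    intro C S hC hcard hperm m hm
    obtain ⟨hadm, hrec⟩ := isCPermA_cons.mp hperm
    obtain ⟨hdiv, hlen, hcard', _, _, _, _⟩ := deleteA_spec hC hcard hadm
    rcases Nat.eq_or_lt_of_le hm with heq | hlt
    · have hfull : S.filter (fun t => indexFn C (s::v) t ≤ m) = S := by
        apply Finset.filter_eq_self.mpr
        intro t ht
        have hb := indexFn_bounds (s::v) C S hC hcard hperm t ht
        have hp := (pos_spec (hC.1 t ht)).1
        omega
      rw [hfull]
      omega
    · have hsub : (S.erase s).filter (fun t => indexFn (deleteA C s) v t ≤ m) ⊆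
          S.filter (fun t => indexFn C (s::v) t ≤ m) := by
        intro t ht
        rw [Finset.mem_filter] at ht ⊢
        obtain ⟨hte, hidx⟩ := ht
        have hts : t ≠ s := (Finset.mem_erase.mp hte).1
        refine ⟨Finset.mem_of_mem_erase hte, ?_⟩
        rwa [indexFn_cons_ne _ _ hts]
      have hih := ih (deleteA C s) (S.erase s) hdiv (by omega) hrec m (by omega)
      have hcle := Finset.card_le_card hsub
      omega



lemma sum_cards {C : List (Finset ℕ)} {S : Finset ℕ} (hC : IsDivision C S) :
    ∑ k ∈ Finset.range C.length, (C.getD k ∅).card = S.card := by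
  rw [← card_filter_pos hC C.length le_rfl]
  congr 1
  apply Finset.filter_eq_self.mpr
  intro t ht
  exact (pos_spec (hC.1 t ht)).1

theorem exists_perm : ∀ (n : ℕ) (C : List (Finset ℕ)) (S : Finset ℕ),
    C.length = n → IsDivision C S → S.card = C.length → Superdiagonal C →
    ∀ I : ℕ → ℕ, IsIndexFn C I →
    ∃ w : List ℕ, IsCPermA C w ∧ ∀ t ∈ S, indexFn C w t = I t := by
  intro n
  induction n using Nat.strong_induction_on with
  | _ n ih =>
    intro C S hlen hC hcard hsd I hI
    rcases Nat.eq_zero_or_pos n with hn0 | hnpos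
    · -- n = 0
      subst hn0
      have hCnil : C = [] := List.length_eq_zero_iff.mp hlen
      refine ⟨[], ?_, ?_⟩
      · subst hCnil; intro B hB; exact absurd hB List.not_mem_nil
      · intro t ht
        have : S = ∅ := Finset.card_eq_zero.mp (by omega)
        rw [this] at ht
        exact absurd ht (Finset.notMem_empty t)
    -- n ≥ 1 : choose the deletion element s
    have hposmem : ∀ t ∈ S, pos C t < n ∧ t ∈ C.getD (pos C t) ∅ := fun t ht => by
      have := pos_spec (hC.1 t ht); rwa [hlen] at this
    have htight0 : ∀ t ∈ C.getD 0 ∅, t ∈ S ∧ pos C t = 0 ∧ I t = pos C t + 1 := by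
      intro t ht
      have htS : t ∈ S := hC.2.1 0 (by omega) ht
      have hp : pos C t = 0 := pos_eq_of_mem hC (by omega) ht
      have := hI 0 (by omega) t ht
      exact ⟨htS, hp, by omega⟩
    set T := S.filter (fun t => I t = pos C t + 1) with hT
    have hC0ne : (C.getD 0 ∅).Nonempty := by
      have h1 := hsd 1 (by omega)
      rw [Finset.sum_range_one] at h1
      exact Finset.card_pos.mp (by omega)
    have hTne : T.Nonempty := by
      obtain ⟨t0, ht0⟩ := hC0ne
      obtain ⟨htS, hp, hIt⟩ := htight0 t0 ht0
      exact ⟨t0, Finset.mem_filter.mpr ⟨htS, hIt⟩⟩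
    have hTimne : (T.image (pos C)).Nonempty := hTne.image _
    set j := (T.image (pos C)).max' hTimne with hj
    obtain ⟨tj, htjT, htjp⟩ := Finset.mem_image.mp ((T.image (pos C)).max'_mem hTimne)
    set TJ := T.filter (fun t => pos C t = j) with hTJ
    have hTJne : TJ.Nonempty := ⟨tj, Finset.mem_filter.mpr ⟨htjT, htjp⟩⟩
    set s := TJ.min' hTJne with hs
    have hsTJ : s ∈ TJ := TJ.min'_mem hTJne
    have hsT : s ∈ T := (Finset.mem_filter.mp hsTJ).1
    have hsS : s ∈ S := (Finset.mem_filter.mp hsT).1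
    have hspos : pos C s = j := (Finset.mem_filter.mp hsTJ).2
    have hsI : I s = j + 1 := by
      have := (Finset.mem_filter.mp hsT).2
      rwa [hspos] at this
    have hjmax : ∀ t ∈ T, pos C t ≤ j := fun t ht =>
      (T.image (pos C)).le_max' _ (Finset.mem_image_of_mem _ ht)
    have hsmin : ∀ t ∈ TJ, s ≤ t := fun t ht => TJ.min'_le t ht
    have hjn : j < n := by rw [← hspos]; exact (hposmem s hsS).1
    have hsj : s ∈ C.getD j ∅ := by
      have := (hposmem s hsS).2; rwa [hspos] at this
    have hsum : ∑ k ∈ Finset.range n, (C.getD k ∅).card = n := by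
      rw [← hlen, sum_cards hC, hcard, hlen]
    have hlastcard : j = n - 1 → (C.getD j ∅).card ≤ 1 := by
      intro hjval
      have h1 := hsd (n-1) (by omega)
      have h2 := Finset.sum_range_succ (fun k => (C.getD k ∅).card) (n-1)
      rw [show (n-1)+1 = n from by omega] at h2
      rw [hjval]
      omega
    have hadm : AdmissibleA C s := by
      refine ⟨j, by omega, hsj, ?_⟩
      rcases Nat.eq_zero_or_pos j with hj0 | hjpos
      · left
        refine ⟨hj0, ?_⟩
        intro t ht
        obtain ⟨htS, hp, hIt⟩ := htight0 t ht
        have htTJ : t ∈ TJ := Finset.mem_filter.mpr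
          ⟨Finset.mem_filter.mpr ⟨htS, hIt⟩, by omega⟩
        exact hsmin t htTJ
      · rcases Nat.lt_or_ge (j+1) n with hmid | hlast
        · right; right; rw [hlen]; exact ⟨hjpos, hmid⟩
        · right; left
          have hjval : j = n - 1 := by omega
          refine ⟨by omega, ?_⟩
          intro t ht
          have hcard1 := hlastcard hjval
          have : t = s := by
            by_contra hne
            have : 1 < (C.getD j ∅).card := Finset.one_lt_card.mpr ⟨t, ht, s, hsj, hne⟩
            omega
          omega
    obtain ⟨hdiv, hlenD, hcardD, hposD, h5, h6, h7⟩ := deleteA_spec hC hcard hadm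
    have hIext : IsIndexFn (deleteA C s) I := by
      intro k hk t htm
      have htm' : t ∈ S.erase s := hdiv.2.1 k hk htm
      have hpk : pos (deleteA C s) t = k := pos_eq_of_mem hdiv hk htm
      obtain ⟨hts, htS⟩ := Finset.mem_erase.mp htm'
      obtain ⟨hpn, hpm⟩ := hposmem t htS
      have hIb := hI (pos C t) (by omega) t hpm
      have h5t := h5 t htm'
      rcases Nat.eq_or_lt_of_le h5t.1 with hEq | hLt
      · constructor
        · omega
        · rw [← hpk, hEq]; omega
      · -- position dropped by one; show t is not tight
        have hnt : I t ≤ pos C t := by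
        -- if tight, derive contradiction
          by_contra hcon
          have htT : t ∈ T := Finset.mem_filter.mpr ⟨htS, by omega⟩
          have hle := hjmax t htT
          have hne6 : ¬ (pos (deleteA C s) t = pos C t) := by omega
          rw [h6 t htm'] at hne6
          push_neg at hne6
          have hptj : pos C t = j := by omega
          have hst : s < t := by
            have := hsmin t (Finset.mem_filter.mpr ⟨htT, hptj⟩)
            omega
          obtain ⟨h2a, h2b⟩ := hne6.2 (by omega)
          rcases Nat.lt_or_ge (pos C s + 1) C.length with hx | hx
          · have := h2b hx
            omega
          · -- j = n - 1 : block has ≤ 1 element but contains s ≠ t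
            have hjval : j = n - 1 := by omega
            have hcard1 := hlastcard hjval
            have htj : t ∈ C.getD j ∅ := by rw [← hptj]; exact hpm
            have : 1 < (C.getD j ∅).card := Finset.one_lt_card.mpr ⟨t, htj, s, hsj, by omega⟩
            omega
        constructor
        · omega
        · omega
    have hsdD := h7 hsd
    obtain ⟨v, hv, hvidx⟩ := ih (n-1) (by omega) (deleteA C s) (S.erase s)
      (by omega) hdiv (by omega) hsdD I hIext
    refine ⟨s :: v, isCPermA_cons.mpr ⟨hadm, hv⟩, ?_⟩
    intro t ht
    by_cases hts : t = s
    · subst hts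
      rw [indexFn_cons_self, hspos, hsI]
    · rw [indexFn_cons_ne _ _ hts]
      exact hvidx t (Finset.mem_erase.mpr ⟨hts, ht⟩)


theorem main_assembly (n : ℕ) (S : Finset ℕ) (C : List (Finset ℕ))
    (hS : S.card = n) (hlen : C.length = n) (hC : IsDivision C S) :
    (∀ w w' : List ℕ, IsCPermA C w → IsCPermA C w' →
      (∀ s ∈ S, indexFn C w s = indexFn C w' s) → w = w') ∧
    ((∀ I : ℕ → ℕ, IsIndexFn C I →
        ∃ w : List ℕ, IsCPermA C w ∧ ∀ s ∈ S, indexFn C w s = I s) ↔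
      Superdiagonal C) ∧
    Nat.card {w : List ℕ // IsCPermA C w} ≤
      ∏ i ∈ Finset.range n, (i + 1) ^ (C.getD i ∅).card ∧
    (Nat.card {w : List ℕ // IsCPermA C w} =
        ∏ i ∈ Finset.range n, (i + 1) ^ (C.getD i ∅).card ↔ Superdiagonal C) := by
  have hcard : S.card = C.length := by omega
  -- part 1 : injectivity
  have part1 : ∀ w w' : List ℕ, IsCPermA C w → IsCPermA C w' →
      (∀ s ∈ S, indexFn C w s = indexFn C w' s) → w = w' :=
    fun w w' hw hw' hag => indexFn_inj w w' C S hC hcard hw hw' hag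
  -- part 2 : the bijection criterion
  have hiff : (∀ I : ℕ → ℕ, IsIndexFn C I →
      ∃ w : List ℕ, IsCPermA C w ∧ ∀ s ∈ S, indexFn C w s = I s) ↔ Superdiagonal C := by
    constructor
    · intro h
      have hI₀ : IsIndexFn C (fun t => pos C t + 1) := by
        intro i hi t ht
        have := pos_eq_of_mem hC hi ht
        show 1 ≤ pos C t + 1 ∧ pos C t + 1 ≤ i + 1
        omega
      obtain ⟨w, hw, hidx⟩ := h _ hI₀
      intro m hm
      have h1 := index_count w C S hC hcard hw m hm
      have h2 : S.filter (fun t => indexFn C w t ≤ m) = S.filter (fun t => pos C t < m) := by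
        apply Finset.filter_congr
        intro t ht
        rw [hidx t ht]
        constructor <;> (intro; omega)
      rw [h2, card_filter_pos hC m hm] at h1
      exact h1
    · intro hsd I hI
      exact exists_perm n C S hlen hC hcard hsd I hI
  -- the injection into index functions
  let Q := ∀ x : {a // a ∈ S}, Fin (pos C x.1 + 1)
  let Φ : {w : List ℕ // IsCPermA C w} → Q := fun w x =>
    ⟨indexFn C w.1 x.1 - 1, by
      have hb := indexFn_bounds w.1 C S hC hcard w.2 x.1 x.2
      omega⟩
  have hinj : Function.Injective Φ := by
    intro w w' h
    apply Subtype.ext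
    apply indexFn_inj w.1 w'.1 C S hC hcard w.2 w'.2
    intro t ht
    have hval : indexFn C w.1 t - 1 = indexFn C w'.1 t - 1 :=
      congrArg Fin.val (congrFun h ⟨t, ht⟩)
    have hb := indexFn_bounds w.1 C S hC hcard w.2 t ht
    have hb' := indexFn_bounds w'.1 C S hC hcard w'.2 t ht
    omega
  have hdisj : (↑(Finset.range n) : Set ℕ).PairwiseDisjoint (fun k => C.getD k ∅) := by
    intro a ha b hb hne
    simp only [Finset.coe_range, Set.mem_Iio] at ha hb
    show Disjoint (C.getD a ∅) (C.getD b ∅)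
    rw [Finset.disjoint_left]
    intro t hta htb
    exact hne (mem_unique hC (by omega) hta (by omega) htb)
  have hSb : S = (Finset.range n).biUnion (fun k => C.getD k ∅) := by
    ext t
    simp only [Finset.mem_biUnion, Finset.mem_range]
    constructor
    · intro ht
      obtain ⟨i, hi, hm⟩ := hC.1 t ht
      exact ⟨i, by omega, hm⟩
    · rintro ⟨k, hk, hm⟩
      exact hC.2.1 k (by omega) hm
  have hprod : (∏ t ∈ S, (pos C t + 1)) = ∏ i ∈ Finset.range n, (i + 1) ^ (C.getD i ∅).card := by
    rw [hSb, Finset.prod_biUnion hdisj]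
    refine Finset.prod_congr rfl fun k hk => ?_
    rw [Finset.mem_range] at hk
    rw [Finset.prod_congr rfl (fun t htm => by rw [pos_eq_of_mem hC (by omega) htm]),
      Finset.prod_const]
  have hQcard : Nat.card Q = ∏ i ∈ Finset.range n, (i + 1) ^ (C.getD i ∅).card := by
    rw [Nat.card_eq_fintype_card, Fintype.card_pi]
    simp only [Fintype.card_fin]
    rw [Finset.prod_coe_sort S (fun t => pos C t + 1)]
    exact hprod
  have part3 : Nat.card {w : List ℕ // IsCPermA C w} ≤
      ∏ i ∈ Finset.range n, (i + 1) ^ (C.getD i ∅).card := by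
    rw [← hQcard]
    exact Nat.card_le_card_of_injective Φ hinj
  have hsurj : Superdiagonal C → Function.Surjective Φ := by
    intro hsd q
    have hI : IsIndexFn C (fun x => if hx : x ∈ S then ((q ⟨x, hx⟩ : Fin _) : ℕ) + 1 else 1) := by
      intro i hi t ht
      have htS := hC.2.1 i hi ht
      have hp := pos_eq_of_mem hC hi ht
      simp only [dif_pos htS]
      have h2 : (q ⟨t, htS⟩ : ℕ) < i + 1 := by
        have := (q ⟨t, htS⟩).isLt
        simpa [hp] using this
      omega
    obtain ⟨w, hw, hidx⟩ := hiff.mpr hsd _ hI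
    refine ⟨⟨w, hw⟩, ?_⟩
    funext x
    apply Fin.ext
    show indexFn C w x.1 - 1 = (q x : ℕ)
    rw [hidx x.1 x.2]
    simp only [dif_pos x.2]
    show ((q x : ℕ) + 1) - 1 = (q x : ℕ)
    omega
  refine ⟨part1, hiff, part3, ?_, ?_⟩
  · intro hEq
    apply hiff.mp
    intro I hI
    have hbij : Function.Bijective Φ := (Nat.bijective_iff_injective_and_card Φ).mpr
      ⟨hinj, by rw [hQcard]; exact hEq⟩
    have hq : ∀ x : {a // a ∈ S}, I x.1 - 1 < pos C x.1 + 1 := by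
      intro x
      obtain ⟨hpn, hpm⟩ := pos_spec (hC.1 x.1 x.2)
      have := hI (pos C x.1) hpn x.1 hpm
      omega
    obtain ⟨⟨w, hw⟩, hqeq⟩ := hbij.2 (fun x => ⟨I x.1 - 1, hq x⟩)
    refine ⟨w, hw, fun t ht => ?_⟩
    have hval : indexFn C w t - 1 = I t - 1 := congrArg Fin.val (congrFun hqeq ⟨t, ht⟩)
    have hb := indexFn_bounds w C S hC hcard hw t ht
    obtain ⟨hpn, hpm⟩ := pos_spec (hC.1 t ht)
    have hI1 := hI (pos C t) hpn t hpm
    omega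
  · intro hsd
    rw [← hQcard]
    exact Nat.card_eq_of_bijective Φ ⟨hinj, hsurj hsd⟩


/-- `w ↦ I_w^C` is an injection from `C`-permutations to index functions
of `C`, a bijection iff `C` is superdiagonal; hence the number of `C`-permutations is
at most `1^{|C₁|} 2^{|C₂|} ⋯ n^{|C_n|}` with equality iff `C` is superdiagonal. -/
theorem indexFn_injection (n : ℕ) (S : Finset ℕ) (C : List (Finset ℕ))
    (hS : S.card = n) (hlen : C.length = n) (hC : IsDivision C S) :
    (∀ w w' : List ℕ, IsCPermA C w → IsCPermA C w' →
      (∀ s ∈ S, indexFn C w s = indexFn C w' s) → w = w') ∧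
    ((∀ I : ℕ → ℕ, IsIndexFn C I →
        ∃ w : List ℕ, IsCPermA C w ∧ ∀ s ∈ S, indexFn C w s = I s) ↔
      Superdiagonal C) ∧
    Nat.card {w : List ℕ // IsCPermA C w} ≤
      ∏ i ∈ Finset.range n, (i + 1) ^ (C.getD i ∅).card ∧
    (Nat.card {w : List ℕ // IsCPermA C w} =
        ∏ i ∈ Finset.range n, (i + 1) ^ (C.getD i ∅).card ↔ Superdiagonal C) := by
  exact main_assembly n S C hS hlen hC

end MixedEulerian
end

section
/- Let c_1,...,c_n be nonnegative integers with c_1 + ... + c_n = n, and suppose there exists 0 ≤ r ≤ n such that c_1 + ... + c_i ≥ i for all 1 ≤ i ≤ r and c_n + c_{n-1} + ... + c_{n-i+1} ≥ i for all 1 ≤ i ≤ n-r. Then for any division C of {1,...,n} with |C| = (c_1,...,c_n), the number of C-permutations equals C(n, c_1+...+c_r) · 1^{c_1} 2^{c_2} ... r^{c_r} · 1^{c_n} 2^{c_{n-1}} ... (n-r)^{c_{r+1}}. -/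
open scoped Pointwise
open MeasureTheory Nat

namespace MixedEulerian

open Finset in
section


def dd (d : ℕ → ℕ) (i a k : ℕ) : ℕ :=
  if k + 1 < i then d k
  else if k + 1 = i then d (i - 1) + a
  else if k = i then d i - 1 - a + d (i + 1)
  else d (k + 1)

lemma dd_of_lt {i k : ℕ} (d : ℕ → ℕ) (a : ℕ) (h : k + 1 < i) : dd d i a k = d k := by
  simp only [dd]; rw [if_pos h]

lemma dd_of_eq {i k : ℕ} (d : ℕ → ℕ) (a : ℕ) (h : k + 1 = i) : dd d i a k = d (i - 1) + a := by
  simp only [dd]; rw [if_neg (by omega), if_pos h]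

lemma dd_of_self (d : ℕ → ℕ) (i a : ℕ) : dd d i a i = d i - 1 - a + d (i + 1) := by
  simp only [dd]; rw [if_neg (by omega), if_neg (by omega)]; simp

lemma dd_of_gt {i k : ℕ} (d : ℕ → ℕ) (a : ℕ) (h : i < k) : dd d i a k = d (k + 1) := by
  simp only [dd]; rw [if_neg (by omega), if_neg (by omega), if_neg (by omega)]

lemma geom_aux (i : ℕ) : ∀ m : ℕ,
    (∑ a ∈ Finset.range m, i ^ a * (i + 1) ^ (m - 1 - a)) + i ^ m = (i + 1) ^ m := by
  intro m
  induction m with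
  | zero => simp
  | succ m ih =>
    rw [Finset.sum_range_succ]
    have h1 : ∀ a ∈ Finset.range m, i ^ a * (i + 1) ^ (m + 1 - 1 - a)
        = (i + 1) * (i ^ a * (i + 1) ^ (m - 1 - a)) := by
      intro a ha
      have ha' : a < m := Finset.mem_range.mp ha
      have : m + 1 - 1 - a = (m - 1 - a) + 1 := by omega
      rw [this, pow_succ]; ring
    rw [Finset.sum_congr rfl h1, ← Finset.mul_sum]
    have h0 : m + 1 - 1 - m = 0 := by omega
    rw [h0]
    have h2 : (i + 1) ^ (m + 1) = (i + 1) * ((∑ a ∈ Finset.range m, i ^ a * (i + 1) ^ (m - 1 - a)) + i ^ m) := by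
      rw [ih]; ring
    rw [h2]; ring

def Lam (d : ℕ → ℕ) (r i a : ℕ) : ℕ := ∏ k ∈ Finset.range (r - 1), (k + 1) ^ (dd d i a k)

lemma Lam_succ (d : ℕ → ℕ) (m i a : ℕ) :
    Lam d (m + 1) i a = ∏ k ∈ Finset.range m, (k + 1) ^ (dd d i a k) := by
  simp [Lam]

lemma half (d : ℕ → ℕ) (r : ℕ) (hr : 1 ≤ r) (hd0 : 1 ≤ d 0) (hdr : d (r - 1) ≤ 1) :
    Lam d r 0 0 + ∑ i ∈ Finset.Ico 1 r, ∑ a ∈ Finset.range (d i), Lam d r i a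
      = ∏ k ∈ Finset.range r, (k + 1) ^ (d k) := by
  obtain ⟨m, rfl⟩ : ∃ m, r = m + 1 := ⟨r - 1, by omega⟩
  simp only [Nat.add_sub_cancel] at hdr
  simp only [Lam_succ]
  rcases Nat.eq_zero_or_pos m with hm0 | hm0
  · subst hm0; simp
  set P : ℕ → ℕ := fun j => ∏ k ∈ Finset.range j, (k + 1) ^ (d k) with hP
  set Q : ℕ → ℕ := fun j => ∏ k ∈ Finset.Ico j m, (k + 1) ^ (d (k + 1)) with hQ
  have hQstep : ∀ j, j < m → Q j = (j + 1) ^ (d (j + 1)) * Q (j + 1) := by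
    intro j hj
    simp only [hQ]
    rw [Finset.prod_eq_prod_Ico_succ_bot hj]
  have hPstep : ∀ j, P (j + 1) = P j * (j + 1) ^ (d j) := by
    intro j; simp only [hP, Finset.prod_range_succ]
  have hLam_mid : ∀ i a, 1 ≤ i → i < m →
      ∏ k ∈ Finset.range m, (k + 1) ^ (dd d i a k)
        = (P i * Q i) * (i ^ a * (i + 1) ^ (d i - 1 - a)) := by
    intro i a hi1 hir
    rw [← Finset.prod_range_mul_prod_Ico _ (le_of_lt hir)]
    have p1 : ∏ k ∈ Finset.range i, (k + 1) ^ (dd d i a k) = P i * i ^ a := by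
      obtain ⟨j, rfl⟩ : ∃ j, i = j + 1 := ⟨i - 1, by omega⟩
      rw [Finset.prod_range_succ]
      rw [Finset.prod_congr rfl (fun k hk => by
        rw [dd_of_lt d a (by have := Finset.mem_range.mp hk; omega)])]
      rw [dd_of_eq d a rfl, Nat.add_sub_cancel, pow_add, hPstep]
      ring
    have p2 : ∏ k ∈ Finset.Ico i m, (k + 1) ^ (dd d i a k)
        = (i + 1) ^ (d i - 1 - a) * Q i := by
      rw [Finset.prod_eq_prod_Ico_succ_bot hir]
      rw [Finset.prod_congr rfl (fun k hk => by
        rw [dd_of_gt d a (by have := (Finset.mem_Ico.mp hk).1; omega)])]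
      rw [dd_of_self, hQstep i hir, pow_add]
      simp only [hQ]
      ring
    rw [p1, p2]; ring
  have hLam0 : ∏ k ∈ Finset.range m, (k + 1) ^ (dd d 0 0 k) = Q 0 := by
    rw [Finset.range_eq_Ico, Finset.prod_eq_prod_Ico_succ_bot hm0]
    rw [Finset.prod_congr rfl (fun k hk => by
      rw [dd_of_gt d 0 (by have := (Finset.mem_Ico.mp hk).1; omega)])]
    rw [dd_of_self d 0 0]
    simp only [hQ]
    conv_rhs => rw [Finset.prod_eq_prod_Ico_succ_bot hm0]
    simp
  have key : ∀ j, 1 ≤ j → j ≤ m →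
      (∏ k ∈ Finset.range m, (k + 1) ^ (dd d 0 0 k))
        + ∑ i ∈ Finset.Ico 1 j, ∑ a ∈ Finset.range (d i), ∏ k ∈ Finset.range m, (k + 1) ^ (dd d i a k)
        = P j * j ^ (d j) * Q j := by
    intro j
    induction j with
    | zero => omega
    | succ j ih =>
      intro _ hjm
      rcases Nat.eq_zero_or_pos j with h1 | h1
      · subst h1
        simp only [Finset.Ico_self, Finset.sum_empty, add_zero]
        rw [hLam0, hQstep 0 hm0]
        have : P 1 = 1 := by simp [hP]
        rw [this]; simp
      · rw [Finset.sum_Ico_succ_top (by omega : 1 ≤ j), ← add_assoc]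
        rw [ih h1 (by omega)]
        rw [Finset.sum_congr rfl (fun a _ => hLam_mid j a h1 (by omega)), ← Finset.mul_sum]
        have hg := geom_aux j (d j)
        calc P j * j ^ d j * Q j + P j * Q j * ∑ a ∈ Finset.range (d j), j ^ a * (j + 1) ^ (d j - 1 - a)
            = P j * Q j * ((∑ a ∈ Finset.range (d j), j ^ a * (j + 1) ^ (d j - 1 - a)) + j ^ (d j)) := by ring
          _ = P j * Q j * (j + 1) ^ (d j) := by rw [hg]
          _ = P (j+1) * (j+1) ^ (d (j+1)) * Q (j+1) := by
              rw [hPstep, hQstep j (by omega)]; ring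
  have hfin := key m hm0 le_rfl
  have hQlast : Q m = 1 := by simp [hQ]
  rw [Finset.sum_Ico_succ_top (by omega : 1 ≤ m), ← add_assoc, hfin, hQlast, mul_one]
  have hLam_last : ∏ k ∈ Finset.range m, (k + 1) ^ (dd d m 0 k)
      = ∏ k ∈ Finset.range m, (k + 1) ^ (d k) := by
    apply Finset.prod_congr rfl
    intro k hk
    have hk' : k < m := Finset.mem_range.mp hk
    rcases Nat.lt_or_ge (k + 1) m with h | h
    · rw [dd_of_lt d _ h]
    · have hkm : k + 1 = m := by omega
      rw [dd_of_eq d _ hkm, Nat.add_zero]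
      have hk2 : k = m - 1 := by omega
      rw [hk2]
      norm_num
  rw [Finset.prod_range_succ]
  rcases Nat.le_one_iff_eq_zero_or_eq_one.mp hdr with h | h
  · rw [h]; simp [hP]
  · rw [h, Finset.sum_range_one, hLam_last]
    simp only [hP, pow_one]
    ring
def FF (n r : ℕ) (cv : ℕ → ℕ) : ℕ :=
  n.choose r * (∏ i ∈ Finset.range r, (i + 1) ^ (cv i)) *
    (∏ i ∈ Finset.range (n - r), (i + 1) ^ (cv (n - 1 - i)))

lemma FF_congr (n r : ℕ) (f g : ℕ → ℕ) (h : ∀ j, j < n → f j = g j) (hr : r ≤ n) :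
    FF n r f = FF n r g := by
  unfold FF
  rcases Nat.eq_zero_or_pos n with h0 | h0
  · subst h0
    have : r = 0 := by omega
    subst this; simp
  congr 1
  · congr 1
    apply Finset.prod_congr rfl
    intro k hk
    rw [h k (by have := Finset.mem_range.mp hk; omega)]
  · apply Finset.prod_congr rfl
    intro k hk
    have hk' := Finset.mem_range.mp hk
    rw [h _ (by omega)]

lemma FF_pos (n r : ℕ) (cv : ℕ → ℕ) (hr : r ≤ n) : 0 < FF n r cv := by
  unfold FF
  apply Nat.mul_pos
  apply Nat.mul_pos
  · exact Nat.choose_pos hr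
  · exact Finset.prod_pos (fun i _ => pow_pos (by omega) _)
  · exact Finset.prod_pos (fun i _ => pow_pos (by omega) _)

lemma factL (n r : ℕ) (cv : ℕ → ℕ) (i a : ℕ) (hn : 2 ≤ n) (hr1 : 1 ≤ r) (hrn : r ≤ n)
    (hbd : cv (r - 1) ≤ 1) (hi : i < r) (ha : a < cv i) :
    FF (n - 1) (r - 1) (dd cv i a)
      = (n - 1).choose (r - 1) * Lam cv r i a *
          ∏ j ∈ Finset.range (n - r), (j + 1) ^ (cv (n - 1 - j)) := by
  unfold FF Lam
  congr 1
  have hnr : n - 1 - (r - 1) = n - r := by omega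
  rw [hnr]
  apply Finset.prod_congr rfl
  intro j hj
  have hj' : j < n - r := Finset.mem_range.mp hj
  congr 1
  by_cases hlt : i < n - 1 - 1 - j
  · rw [dd_of_gt _ _ hlt]
    congr 1
    omega
  · have hie : i = n - 1 - 1 - j := by omega
    have hcv1 : cv i = 1 := by
      have hir : i = r - 1 := by omega
      rw [hir] at ha ⊢
      omega
    have ha0 : a = 0 := by omega
    rw [← hie, dd_of_self, hcv1, ha0]
    have h2 : n - 1 - j = i + 1 := by omega
    rw [h2]
    omega

lemma factR (n r : ℕ) (cv : ℕ → ℕ) (i a : ℕ) (hn : 2 ≤ n) (hrn : r ≤ n - 1)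
    (hbd : cv r ≤ 1) (hi : r ≤ i) (hin : i < n) (ha : a < cv i) :
    FF (n - 1) r (dd cv i a)
      = (n - 1).choose r * (∏ k ∈ Finset.range r, (k + 1) ^ (cv k)) *
          Lam (fun j => cv (n - 1 - j)) (n - r) (n - 1 - i) (cv i - 1 - a) := by
  unfold FF Lam
  have hL : ∏ k ∈ Finset.range r, (k + 1) ^ (dd cv i a k)
      = ∏ k ∈ Finset.range r, (k + 1) ^ (cv k) := by
    apply Finset.prod_congr rfl
    intro k hk
    have hk' : k < r := Finset.mem_range.mp hk
    congr 1
    by_cases h1 : k + 1 < i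
    · rw [dd_of_lt _ _ h1]
    · have hk1 : k + 1 = i := by omega
      rw [dd_of_eq _ _ hk1]
      have hcv1 : cv i = 1 := by
        have hir : i = r := by omega
        rw [hir] at ha ⊢
        omega
      have ha0 : a = 0 := by omega
      rw [ha0]
      have hik : i - 1 = k := by omega
      rw [hik]
      omega
  rw [hL]
  congr 1
  have hlen : n - 1 - r = n - r - 1 := by omega
  rw [hlen]
  apply Finset.prod_congr rfl
  intro m hm
  have hm' : m < n - r - 1 := Finset.mem_range.mp hm
  congr 1
  by_cases c1 : i < n - 1 - 1 - m
  · rw [dd_of_gt _ _ c1, dd_of_lt _ _ (by omega : m + 1 < n - 1 - i)]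
    congr 1
    omega
  by_cases c2 : i = n - 1 - 1 - m
  · rw [← c2, dd_of_self, dd_of_eq _ _ (by omega : m + 1 = n - 1 - i)]
    have e1 : n - 1 - (n - 1 - i - 1) = i + 1 := by omega
    rw [e1]
    omega
  by_cases c3 : m = n - 1 - i
  · subst c3
    rw [dd_of_eq _ _ (by omega : (n - 1 - 1 - (n - 1 - i)) + 1 = i), dd_of_self]
    have e2 : n - 1 - (n - 1 - i) = i := by omega
    have e3 : n - 1 - (n - 1 - i + 1) = i - 1 := by omega
    rw [e2, e3]
    omega
  · rw [dd_of_lt _ _ (by omega : (n - 1 - 1 - m) + 1 < i), dd_of_gt _ _ (by omega : n - 1 - i < m)]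
    congr 1
    omega

lemma reidx (n r : ℕ) (cv : ℕ → ℕ) (hr : 1 ≤ r) (T : ℕ → ℕ → ℕ) :
    ∑ i ∈ Finset.Ico r (n-1), ∑ a ∈ Finset.range (cv i), T (n - 1 - i) (cv i - 1 - a)
      = ∑ j ∈ Finset.Ico 1 (n - r), ∑ a ∈ Finset.range (cv (n - 1 - j)), T j a := by
  have h1 : ∀ i, ∑ a ∈ Finset.range (cv i), T (n - 1 - i) (cv i - 1 - a)
      = ∑ a ∈ Finset.range (cv i), T (n - 1 - i) a := by
    intro i
    exact Finset.sum_range_reflect (fun a => T (n - 1 - i) a) (cv i)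
  rw [Finset.sum_congr rfl (fun i _ => h1 i)]
  apply Finset.sum_nbij' (i := fun i => n - 1 - i) (j := fun j => n - 1 - j)
  · intro i hi
    have := Finset.mem_Ico.mp hi
    rw [Finset.mem_Ico]
    omega
  · intro j hj
    have := Finset.mem_Ico.mp hj
    rw [Finset.mem_Ico]
    omega
  · intro i hi
    have := Finset.mem_Ico.mp hi
    omega
  · intro j hj
    have := Finset.mem_Ico.mp hj
    omega
  · intro i hi
    have := Finset.mem_Ico.mp hi
    have e : n - 1 - (n - 1 - i) = i := by omega
    rw [e]

lemma num (n r : ℕ) (cv : ℕ → ℕ) (hn : 2 ≤ n) (hrn : r ≤ n)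
    (H1 : ∀ i, i ≤ r → i ≤ ∑ j ∈ Finset.range i, cv j)
    (H2 : ∀ i, r ≤ i → i ≤ n → ∑ j ∈ Finset.range i, cv j ≤ i)
    (HS : ∑ j ∈ Finset.range n, cv j = n) :
    (if cv 0 = 0 then 0 else FF (n-1) (if 0 < r then r - 1 else r) (dd cv 0 0))
    + (∑ i ∈ Finset.Ioo 0 (n-1), ∑ a ∈ Finset.range (cv i),
        FF (n-1) (if i < r then r - 1 else r) (dd cv i a))
    + (if cv (n-1) = 0 then 0 else
        FF (n-1) (if n - 1 < r then r - 1 else r) (dd cv (n-1) (cv (n-1) - 1)))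
    = FF n r cv := by
  have hsvr : ∑ j ∈ Finset.range r, cv j = r := le_antisymm (H2 r le_rfl hrn) (H1 r le_rfl)
  have hIoo : Finset.Ioo 0 (n-1) = Finset.Ico 1 (n-1) := by
    ext x; simp only [Finset.mem_Ioo, Finset.mem_Ico]; omega
  have hsp : ∑ j ∈ Finset.range (n-1), cv j + cv (n-1) = n := by
    have h := Finset.sum_range_succ cv (n-1)
    rw [show (n-1)+1 = n by omega] at h
    omega
  rcases Nat.eq_zero_or_pos r with hr0 | hr1
  · -- CASE r = 0
    subst hr0
    have hc0le : cv 0 ≤ 1 := by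
      have h := H2 1 (by omega) (by omega)
      simpa using h
    have hcvn : 1 ≤ cv (n-1) := by
      have h := H2 (n-1) (by omega) (by omega)
      omega
    have hR := half (fun j => cv (n - 1 - j)) n (by omega)
      (by simpa using hcvn)
      (by show cv (n - 1 - (n - 1)) ≤ 1; rw [show n - 1 - (n - 1) = 0 by omega]; exact hc0le)
    have keyR : ∀ i a, i < n → a < cv i → FF (n-1) 0 (dd cv i a)
        = Lam (fun j => cv (n - 1 - j)) n (n - 1 - i) (cv i - 1 - a) := by
      intro i a hi ha
      rw [factR n 0 cv i a hn (by omega) (by omega) (by omega) hi ha]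
      simp [show n - 0 = n by omega]
    have hfirst : (if cv 0 = 0 then 0 else FF (n-1) (if 0 < 0 then 0 - 1 else 0) (dd cv 0 0))
        = ∑ a ∈ Finset.range (cv 0), Lam (fun j => cv (n - 1 - j)) n (n-1) a := by
      rcases Nat.le_one_iff_eq_zero_or_eq_one.mp hc0le with h | h
      · rw [h]; simp
      · rw [h, if_neg (by omega), Finset.sum_range_one, if_neg (by omega)]
        rw [keyR 0 0 (by omega) (by omega), h]
        norm_num
    have hmid : ∑ i ∈ Finset.Ioo 0 (n-1), ∑ a ∈ Finset.range (cv i),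
          FF (n-1) (if i < 0 then 0 - 1 else 0) (dd cv i a)
        = ∑ j ∈ Finset.Ico 1 (n-1), ∑ a ∈ Finset.range (cv (n - 1 - j)),
            Lam (fun j => cv (n - 1 - j)) n j a := by
      rw [hIoo]
      rw [show (n : ℕ) - 1 = n - 1 from rfl]
      rw [← reidx n 1 cv le_rfl (fun j a => Lam (fun j => cv (n - 1 - j)) n j a)]
      apply Finset.sum_congr rfl
      intro i hi
      have hi' := Finset.mem_Ico.mp hi
      apply Finset.sum_congr rfl
      intro a ha
      rw [if_neg (by omega)]
      exact keyR i a (by omega) (Finset.mem_range.mp ha)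
    have hlast : (if cv (n-1) = 0 then 0 else
          FF (n-1) (if n - 1 < 0 then 0 - 1 else 0) (dd cv (n-1) (cv (n-1) - 1)))
        = Lam (fun j => cv (n - 1 - j)) n 0 0 := by
      rw [if_neg (by omega), if_neg (by omega)]
      rw [keyR (n-1) (cv (n-1) - 1) (by omega) (by omega)]
      rw [show n - 1 - (n-1) = 0 by omega, show cv (n-1) - 1 - (cv (n-1) - 1) = 0 by omega]
    rw [hfirst, hmid, hlast]
    have hsplit : ∑ j ∈ Finset.Ico 1 n, ∑ a ∈ Finset.range (cv (n - 1 - j)),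
          Lam (fun j => cv (n - 1 - j)) n j a
        = (∑ j ∈ Finset.Ico 1 (n-1), ∑ a ∈ Finset.range (cv (n - 1 - j)),
            Lam (fun j => cv (n - 1 - j)) n j a)
          + ∑ a ∈ Finset.range (cv 0), Lam (fun j => cv (n - 1 - j)) n (n-1) a := by
      rw [show Finset.Ico 1 n = Finset.Ico 1 ((n-1)+1) by congr 1; omega]
      rw [Finset.sum_Ico_succ_top (by omega : 1 ≤ n - 1)]
      rw [show n - 1 - (n-1) = 0 by omega]
    beta_reduce at hR
    have hre : ∀ x y z : ℕ, x + y + z = z + (y + x) := fun x y z => by ring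
    rw [hre, ← hsplit, hR]
    simp [FF]
  -- now r ≥ 1
  have hcv0 : 1 ≤ cv 0 := by
    have h := H1 1 (by omega)
    simpa using h
  have hbdl : cv (r-1) ≤ 1 := by
    have h1 := H1 (r-1) (by omega)
    have h := Finset.sum_range_succ cv (r-1)
    rw [show (r-1)+1 = r by omega] at h
    omega
  have hL := half cv r hr1 hcv0 hbdl
  have keyL : ∀ i a, i < r → a < cv i → FF (n-1) (r-1) (dd cv i a)
      = (n-1).choose (r-1) * Lam cv r i a * ∏ j ∈ Finset.range (n - r), (j + 1) ^ (cv (n - 1 - j)) :=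
    fun i a hi ha => factL n r cv i a hn hr1 hrn hbdl hi ha
  rcases Nat.lt_or_ge r n with hrltn | hrgen
  · -- CASE A : 1 ≤ r < n
    have hbdr : cv r ≤ 1 := by
      have h2 := H2 (r+1) (by omega) (by omega)
      have h := Finset.sum_range_succ cv r
      omega
    have hcvn : 1 ≤ cv (n-1) := by
      have h := H2 (n-1) (by omega) (by omega)
      omega
    have hR := half (fun j => cv (n - 1 - j)) (n - r) (by omega)
      (by simpa using hcvn)
      (by beta_reduce; rw [show n - 1 - (n - r - 1) = r by omega]; exact hbdr)
    beta_reduce at hR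
    have keyR : ∀ i a, r ≤ i → i < n → a < cv i → FF (n-1) r (dd cv i a)
        = (n-1).choose r * (∏ k ∈ Finset.range r, (k+1)^(cv k)) *
            Lam (fun j => cv (n - 1 - j)) (n - r) (n - 1 - i) (cv i - 1 - a) :=
      fun i a hi hin ha => factR n r cv i a hn (by omega) hbdr hi hin ha
    have hfirst : (if cv 0 = 0 then 0 else FF (n-1) (if 0 < r then r - 1 else r) (dd cv 0 0))
        = (n-1).choose (r-1) * Lam cv r 0 0 * ∏ j ∈ Finset.range (n - r), (j + 1) ^ (cv (n - 1 - j)) := by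
      rw [if_neg (by omega), if_pos hr1, keyL 0 0 (by omega) (by omega)]
    have hlast : (if cv (n-1) = 0 then 0 else
          FF (n-1) (if n - 1 < r then r - 1 else r) (dd cv (n-1) (cv (n-1) - 1)))
        = (n-1).choose r * (∏ k ∈ Finset.range r, (k+1)^(cv k)) *
            Lam (fun j => cv (n - 1 - j)) (n - r) 0 0 := by
      rw [if_neg (by omega), if_neg (by omega)]
      rw [keyR (n-1) (cv (n-1) - 1) (by omega) (by omega) (by omega)]
      rw [show n - 1 - (n-1) = 0 by omega, show cv (n-1) - 1 - (cv (n-1) - 1) = 0 by omega]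
    have hmidsplit : ∑ i ∈ Finset.Ioo 0 (n-1), ∑ a ∈ Finset.range (cv i),
          FF (n-1) (if i < r then r - 1 else r) (dd cv i a)
        = (∑ i ∈ Finset.Ico 1 r, ∑ a ∈ Finset.range (cv i), FF (n-1) (r-1) (dd cv i a))
          + ∑ i ∈ Finset.Ico r (n-1), ∑ a ∈ Finset.range (cv i), FF (n-1) r (dd cv i a) := by
      rw [hIoo, ← Finset.sum_Ico_consecutive _ (by omega : 1 ≤ r) (by omega : r ≤ n - 1)]
      congr 1
      · apply Finset.sum_congr rfl; intro i hi
        have hi' := Finset.mem_Ico.mp hi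
        apply Finset.sum_congr rfl; intro a _
        rw [if_pos (by omega)]
      · apply Finset.sum_congr rfl; intro i hi
        have hi' := Finset.mem_Ico.mp hi
        apply Finset.sum_congr rfl; intro a _
        rw [if_neg (by omega)]
    have hml : ∑ i ∈ Finset.Ico 1 r, ∑ a ∈ Finset.range (cv i), FF (n-1) (r-1) (dd cv i a)
        = (n-1).choose (r-1) * (∑ i ∈ Finset.Ico 1 r, ∑ a ∈ Finset.range (cv i), Lam cv r i a)
            * ∏ j ∈ Finset.range (n - r), (j + 1) ^ (cv (n - 1 - j)) := by
      rw [Finset.sum_congr rfl (fun i hi => Finset.sum_congr rfl (fun a ha =>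
        keyL i a (by have := (Finset.mem_Ico.mp hi).2; omega) (Finset.mem_range.mp ha)))]
      simp only [Finset.mul_sum, Finset.sum_mul]
    have hmr : ∑ i ∈ Finset.Ico r (n-1), ∑ a ∈ Finset.range (cv i), FF (n-1) r (dd cv i a)
        = (n-1).choose r * (∏ k ∈ Finset.range r, (k+1)^(cv k)) *
            (∑ j ∈ Finset.Ico 1 (n - r), ∑ a ∈ Finset.range (cv (n - 1 - j)),
              Lam (fun j => cv (n - 1 - j)) (n - r) j a) := by
      rw [Finset.sum_congr rfl (fun i hi => Finset.sum_congr rfl (fun a ha =>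
        keyR i a (Finset.mem_Ico.mp hi).1 (by have := (Finset.mem_Ico.mp hi).2; omega)
          (Finset.mem_range.mp ha)))]
      rw [reidx n r cv hr1 (fun x y => (n-1).choose r * (∏ k ∈ Finset.range r, (k+1)^(cv k)) *
        Lam (fun j => cv (n - 1 - j)) (n - r) x y)]
      simp only [Finset.mul_sum, Finset.sum_mul]
    rw [hfirst, hmidsplit, hml, hmr, hlast]
    have hpas : (n-1).choose (r-1) + (n-1).choose r = n.choose r := by
      have h := Nat.choose_succ_succ (n-1) (r-1)
      simp only [Nat.succ_eq_add_one] at h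
      rw [show (r-1)+1 = r by omega] at h
      rw [show (n-1)+1 = n by omega] at h
      omega
    have hRsum := hR
    calc ((n-1).choose (r-1) * Lam cv r 0 0 * ∏ j ∈ Finset.range (n - r), (j + 1) ^ (cv (n - 1 - j)))
          + (((n-1).choose (r-1) * (∑ i ∈ Finset.Ico 1 r, ∑ a ∈ Finset.range (cv i), Lam cv r i a)
              * ∏ j ∈ Finset.range (n - r), (j + 1) ^ (cv (n - 1 - j)))
            + ((n-1).choose r * (∏ k ∈ Finset.range r, (k+1)^(cv k)) *
              (∑ j ∈ Finset.Ico 1 (n - r), ∑ a ∈ Finset.range (cv (n - 1 - j)),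
                Lam (fun j => cv (n - 1 - j)) (n - r) j a)))
          + ((n-1).choose r * (∏ k ∈ Finset.range r, (k+1)^(cv k)) *
              Lam (fun j => cv (n - 1 - j)) (n - r) 0 0)
        = (n-1).choose (r-1) * (Lam cv r 0 0 + ∑ i ∈ Finset.Ico 1 r, ∑ a ∈ Finset.range (cv i), Lam cv r i a)
            * ∏ j ∈ Finset.range (n - r), (j + 1) ^ (cv (n - 1 - j))
          + (n-1).choose r * (∏ k ∈ Finset.range r, (k+1)^(cv k)) *
            (Lam (fun j => cv (n - 1 - j)) (n - r) 0 0
              + ∑ j ∈ Finset.Ico 1 (n - r), ∑ a ∈ Finset.range (cv (n - 1 - j)),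
                  Lam (fun j => cv (n - 1 - j)) (n - r) j a) := by ring
      _ = (n-1).choose (r-1) * (∏ k ∈ Finset.range r, (k+1)^(cv k))
            * ∏ j ∈ Finset.range (n - r), (j + 1) ^ (cv (n - 1 - j))
          + (n-1).choose r * (∏ k ∈ Finset.range r, (k+1)^(cv k)) *
            ∏ j ∈ Finset.range (n - r), (j + 1) ^ (cv (n - 1 - j)) := by rw [hL, hRsum]
      _ = FF n r cv := by
          unfold FF
          rw [← hpas]
          ring
  · -- CASE C : r = n
    have hrn2 : r = n := by omega
    rw [hrn2] at hbdl hL keyL ⊢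
    have hRempty : ∏ j ∈ Finset.range (n - n), ((j+1):ℕ) ^ (cv (n - 1 - j)) = 1 := by
      rw [Nat.sub_self]
      simp
    have keyL' : ∀ i a, i < n → a < cv i → FF (n-1) (n-1) (dd cv i a) = Lam cv n i a := by
      intro i a hi ha
      rw [keyL i a hi ha, hRempty, Nat.choose_self]
      ring
    have hfirst : (if cv 0 = 0 then 0 else FF (n-1) (if 0 < n then n - 1 else n) (dd cv 0 0))
        = Lam cv n 0 0 := by
      rw [if_neg (by omega), if_pos (by omega), keyL' 0 0 (by omega) (by omega)]
    have hlast : (if cv (n-1) = 0 then 0 else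
          FF (n-1) (if n - 1 < n then n - 1 else n) (dd cv (n-1) (cv (n-1) - 1)))
        = ∑ a ∈ Finset.range (cv (n-1)), Lam cv n (n-1) a := by
      rcases Nat.le_one_iff_eq_zero_or_eq_one.mp hbdl with h | h
      · rw [show n - 1 = n - 1 from rfl] at h
        rw [h]
        simp
      · rw [h, if_neg (by omega), if_pos (by omega), Finset.sum_range_one]
        norm_num
        exact keyL' (n-1) 0 (by omega) (by omega)
    have hmid : ∑ i ∈ Finset.Ioo 0 (n-1), ∑ a ∈ Finset.range (cv i),
          FF (n-1) (if i < n then n - 1 else n) (dd cv i a)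
        = ∑ i ∈ Finset.Ico 1 (n-1), ∑ a ∈ Finset.range (cv i), Lam cv n i a := by
      rw [hIoo]
      apply Finset.sum_congr rfl
      intro i hi
      have hi' := Finset.mem_Ico.mp hi
      apply Finset.sum_congr rfl
      intro a ha
      rw [if_pos (by omega), keyL' i a (by omega) (Finset.mem_range.mp ha)]
    rw [hfirst, hmid, hlast]
    have hsplit : ∑ i ∈ Finset.Ico 1 n, ∑ a ∈ Finset.range (cv i), Lam cv n i a
        = (∑ i ∈ Finset.Ico 1 (n-1), ∑ a ∈ Finset.range (cv i), Lam cv n i a)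
          + ∑ a ∈ Finset.range (cv (n-1)), Lam cv n (n-1) a := by
      rw [show Finset.Ico 1 n = Finset.Ico 1 ((n-1)+1) by congr 1; omega]
      rw [Finset.sum_Ico_succ_top (by omega : 1 ≤ n - 1)]
    rw [add_assoc, ← hsplit, hL]
    unfold FF
    rw [Nat.choose_self, Nat.sub_self]
    simp

lemma svdd_le (cv : ℕ → ℕ) (i a : ℕ) (hia : i = 0 → a = 0) :
    ∀ u, u ≤ i → ∑ j ∈ Finset.range u, dd cv i a j
      = (∑ j ∈ Finset.range u, cv j) + (if u = i then a else 0) := by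
  intro u
  induction u with
  | zero =>
    intro _
    simp only [Finset.range_zero, Finset.sum_empty]
    by_cases h : (0 : ℕ) = i
    · rw [if_pos h]
      have := hia (by omega)
      omega
    · rw [if_neg h]
      omega
  | succ u ih =>
    intro hu
    have hu' : u ≤ i := by omega
    rw [Finset.sum_range_succ, Finset.sum_range_succ, ih hu']
    by_cases h : u + 1 = i
    · rw [dd_of_eq cv a h, if_neg (by omega), if_pos h, show i - 1 = u by omega]
      omega
    · rw [dd_of_lt cv a (by omega), if_neg (by omega), if_neg h]
      omega

lemma svdd_gt (cv : ℕ → ℕ) (i a : ℕ) (hia : i = 0 → a = 0) (ha : a < cv i) :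
    ∀ u, i < u → (∑ j ∈ Finset.range u, dd cv i a j) + 1 = ∑ j ∈ Finset.range (u + 1), cv j := by
  intro u
  induction u with
  | zero => omega
  | succ u ih =>
    intro hu
    rw [Finset.sum_range_succ]
    by_cases h : i < u
    · rw [dd_of_gt cv a h, Finset.sum_range_succ]
      have := ih h
      omega
    · have hui : u = i := by omega
      subst hui
      rw [dd_of_self, svdd_le cv u a hia u le_rfl, if_pos rfl]
      rw [Finset.sum_range_succ, Finset.sum_range_succ]
      omega

lemma hyp_dd (n r : ℕ) (cv : ℕ → ℕ) (i a : ℕ) (hn : 1 ≤ n) (hrn : r ≤ n) (hi : i < n)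
    (ha : a < cv i) (hia : i = 0 → a = 0)
    (H1 : ∀ u, u ≤ r → u ≤ ∑ j ∈ Finset.range u, cv j)
    (H2 : ∀ u, r ≤ u → u ≤ n → ∑ j ∈ Finset.range u, cv j ≤ u) :
    ((if i < r then r - 1 else r) ≤ n - 1) ∧
    (∀ u, u ≤ (if i < r then r - 1 else r) → u ≤ ∑ j ∈ Finset.range u, dd cv i a j) ∧
    (∀ u, (if i < r then r - 1 else r) ≤ u → u ≤ n - 1 →
      ∑ j ∈ Finset.range u, dd cv i a j ≤ u) := by
  have hsvr : ∑ j ∈ Finset.range r, cv j = r := le_antisymm (H2 r le_rfl hrn) (H1 r le_rfl)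
  by_cases hir : i < r
  · rw [if_pos hir]
    refine ⟨by omega, ?_, ?_⟩
    · intro u hu
      by_cases hu2 : u ≤ i
      · rw [svdd_le cv i a hia u hu2]
        have := H1 u (by omega)
        omega
      · have h := svdd_gt cv i a hia ha u (by omega)
        have := H1 (u+1) (by omega)
        omega
    · intro u hu1 hu2
      by_cases hu3 : i < u
      · have h := svdd_gt cv i a hia ha u hu3
        have := H2 (u+1) (by omega) (by omega)
        omega
      · -- u ≤ i ≤ r-1 ≤ u forces u = i = r - 1
        have hui : u = i := by omega
        subst hui
        rw [svdd_le cv u a hia u le_rfl, if_pos rfl]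
        have h1 := H1 u (by omega)
        have hs : ∑ j ∈ Finset.range (u+1), cv j = ∑ j ∈ Finset.range u, cv j + cv u :=
          Finset.sum_range_succ cv u
        rw [show u + 1 = r by omega, hsvr] at hs
        omega
  · rw [if_neg hir]
    have hri : r ≤ i := by omega
    refine ⟨by omega, ?_, ?_⟩
    · intro u hu
      rw [svdd_le cv i a hia u (by omega)]
      have := H1 u hu
      omega
    · intro u hu1 hu2
      by_cases hu3 : i < u
      · have h := svdd_gt cv i a hia ha u hu3
        have := H2 (u+1) (by omega) (by omega)
        omega
      · by_cases hu4 : u = i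
        · subst hu4
          rw [svdd_le cv u a hia u le_rfl, if_pos rfl]
          have h2 := H2 (u+1) (by omega) (by omega)
          have hs := Finset.sum_range_succ cv u
          omega
        · rw [svdd_le cv i a hia u (by omega), if_neg hu4]
          have := H2 u hu1 (by omega)
          omega

lemma getD_append_left {l l' : List (Finset ℕ)} {n : ℕ} (h : n < l.length) :
    (l ++ l').getD n ∅ = l.getD n ∅ := by
  simp [List.getD_eq_getElem?_getD, List.getElem?_append, h]

lemma getD_append_right {l l' : List (Finset ℕ)} {n : ℕ} (h : l.length ≤ n) :
    (l ++ l').getD n ∅ = l'.getD (n - l.length) ∅ := by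
  simp [List.getD_eq_getElem?_getD, List.getElem?_append_right h]

lemma getD_take'_s14 {l : List (Finset ℕ)} {n k : ℕ} (h : n < k) :
    (l.take k).getD n ∅ = l.getD n ∅ := by
  simp [List.getD_eq_getElem?_getD, List.getElem?_take, h]

lemma getD_drop'_s14 {l : List (Finset ℕ)} {n k : ℕ} :
    (l.drop k).getD n ∅ = l.getD (k + n) ∅ := by
  simp [List.getD_eq_getElem?_getD, List.getElem?_drop]

lemma div_unique {C : List (Finset ℕ)} {S : Finset ℕ} (h : IsDivision C S) {i j s : ℕ}
    (hi : i < C.length) (hj : j < C.length)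
    (hsi : s ∈ C.getD i ∅) (hsj : s ∈ C.getD j ∅) : i = j := by
  rcases Nat.lt_trichotomy i j with h' | h' | h'
  · exact absurd (h.2.2 i j h' hj s hsi s hsj) (lt_irrefl s)
  · exact h'
  · exact absurd (h.2.2 j i h' hi s hsj s hsi) (lt_irrefl s)

lemma div_findIdx {C : List (Finset ℕ)} {S : Finset ℕ} (h : IsDivision C S) {i s : ℕ}
    (hi : i < C.length) (hs : s ∈ C.getD i ∅) :
    C.findIdx (fun b => decide (s ∈ b)) = i := by
  rw [List.findIdx_eq hi]
  constructor
  · simp only [decide_eq_true_eq]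
    rwa [← List.getD_eq_getElem C ∅ hi]
  · intro j hj
    simp only [decide_eq_false_iff_not]
    intro hmem
    rw [← List.getD_eq_getElem C ∅ (by omega)] at hmem
    have := div_unique h (by omega) hi hmem hs
    omega

/-- Expected blocks of `deleteA C s` when `s` is in block `i`. -/
def EB (C : List (Finset ℕ)) (i s j : ℕ) : Finset ℕ :=
  if j + 1 < i then C.getD j ∅
  else if j + 1 = i then C.getD (i - 1) ∅ ∪ (C.getD i ∅).filter (fun t => t < s)
  else if j = i then (C.getD i ∅).filter (fun t => s < t) ∪ C.getD (i + 1) ∅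
  else C.getD (j + 1) ∅

lemma deleteA_first {C : List (Finset ℕ)} {S : Finset ℕ} (hdiv : IsDivision C S)
    (hn : 2 ≤ C.length) {s : ℕ} (hs : s ∈ C.getD 0 ∅) :
    (deleteA C s).length = C.length - 1 ∧
    ∀ j, j < C.length - 1 → (deleteA C s).getD j ∅ = EB C 0 s j := by
  have hfi := div_findIdx hdiv (by omega) hs
  have hD : deleteA C s
      = ((C.getD 0 ∅).filter (fun t => s < t) ∪ C.getD 1 ∅) :: C.drop 2 := by
    simp only [deleteA, hfi]
    rw [if_neg (by omega)]
    simp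
  rw [hD]
  constructor
  · simp only [List.length_cons, List.length_drop]
    omega
  · intro j hj
    match j with
    | 0 =>
      rw [List.getD_cons_zero]
      simp only [EB]
      rw [if_neg (by omega), if_neg (by omega)]
      simp
    | (k+1) =>
      rw [List.getD_cons_succ, getD_drop'_s14]
      simp only [EB]
      rw [if_neg (by omega), if_neg (by omega), if_neg (by omega)]
      congr 1
      omega

lemma deleteA_last {C : List (Finset ℕ)} {S : Finset ℕ} (hdiv : IsDivision C S)
    (hn : 2 ≤ C.length) {s : ℕ} {i : ℕ} (hi : i = C.length - 1) (hi1 : 1 ≤ i)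
    (hs : s ∈ C.getD i ∅) :
    (deleteA C s).length = C.length - 1 ∧
    ∀ j, j < C.length - 1 → (deleteA C s).getD j ∅ = EB C i s j := by
  have hfi := div_findIdx hdiv (by omega) hs
  have hD : deleteA C s
      = C.take (i-1) ++ [C.getD (i-1) ∅ ∪ (C.getD i ∅).filter (fun t => t < s)] := by
    simp only [deleteA, hfi]
    rw [if_neg (by omega), if_neg (by omega), if_pos hi]
  rw [hD]
  have hlt : (C.take (i-1)).length = i - 1 := by
    simp only [List.length_take]
    omega
  constructor
  · simp only [List.length_append, hlt, List.length_cons, List.length_nil]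
    omega
  · intro j hj
    rcases Nat.lt_or_ge j (i-1) with h | h
    · rw [getD_append_left (by omega), getD_take'_s14 h]
      simp only [EB]
      rw [if_pos (by omega)]
    · have hji : j = i - 1 := by omega
      rw [getD_append_right (by omega), hlt, hji]
      rw [show i - 1 - (i-1) = 0 by omega, List.getD_cons_zero]
      simp only [EB]
      rw [if_neg (by omega), if_pos (by omega)]

lemma deleteA_mid {C : List (Finset ℕ)} {S : Finset ℕ} (hdiv : IsDivision C S)
    {s : ℕ} {i : ℕ} (hi1 : 1 ≤ i) (hi2 : i + 2 ≤ C.length)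
    (hs : s ∈ C.getD i ∅) :
    (deleteA C s).length = C.length - 1 ∧
    ∀ j, j < C.length - 1 → (deleteA C s).getD j ∅ = EB C i s j := by
  have hfi := div_findIdx hdiv (by omega) hs
  have hD : deleteA C s
      = (C.take (i-1) ++ [C.getD (i-1) ∅ ∪ (C.getD i ∅).filter (fun t => t < s),
          (C.getD i ∅).filter (fun t => s < t) ∪ C.getD (i+1) ∅]) ++ C.drop (i+2) := by
    simp only [deleteA, hfi]
    rw [if_neg (by omega), if_neg (by omega), if_neg (by omega)]
  rw [hD]
  have hlt : (C.take (i-1)).length = i - 1 := by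
    simp only [List.length_take]
    omega
  have hlt2 : (C.take (i-1) ++ [C.getD (i-1) ∅ ∪ (C.getD i ∅).filter (fun t => t < s),
      (C.getD i ∅).filter (fun t => s < t) ∪ C.getD (i+1) ∅]).length = i + 1 := by
    simp only [List.length_append, hlt, List.length_cons, List.length_nil]
    omega
  constructor
  · simp only [List.length_append, hlt, List.length_cons, List.length_nil, List.length_drop]
    omega
  · intro j hj
    rcases Nat.lt_or_ge j (i-1) with h | h
    · rw [getD_append_left (by omega : j < _), getD_append_left (by omega), getD_take'_s14 h]
      simp only [EB]
      rw [if_pos (by omega)]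
    · rcases Nat.lt_or_ge j (i+1) with h2 | h2
      · rw [getD_append_left (by omega : j < _)]
        rw [getD_append_right (by rw [hlt]; omega), hlt]
        rcases Nat.eq_or_lt_of_le h with h3 | h3
        · rw [← h3, show i - 1 - (i - 1) = 0 by omega, List.getD_cons_zero]
          simp only [EB]
          rw [if_neg (by omega), if_pos (by omega)]
        · have hji : j = i := by omega
          rw [hji, show i - (i-1) = 1 by omega, List.getD_cons_succ, List.getD_cons_zero]
          simp only [EB]
          rw [if_neg (by omega), if_neg (by omega)]
          simp
      · rw [getD_append_right (by rw [hlt2]; omega), hlt2, getD_drop'_s14]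
        simp only [EB]
        rw [if_neg (by omega), if_neg (by omega), if_neg (by omega)]
        congr 1
        omega

lemma card_filters (B : Finset ℕ) (s : ℕ) (hs : s ∈ B) :
    (B.filter (fun t => t < s)).card + (B.filter (fun t => s < t)).card + 1 = B.card := by
  have h1 : B.erase s = B.filter (fun t => t < s) ∪ B.filter (fun t => s < t) := by
    ext t
    simp only [Finset.mem_erase, Finset.mem_filter, Finset.mem_union]
    constructor
    · rintro ⟨hne, htB⟩
      rcases Nat.lt_or_ge t s with h | h
      · exact Or.inl ⟨htB, h⟩
      · exact Or.inr ⟨htB, by omega⟩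
    · rintro (⟨htB, h⟩ | ⟨htB, h⟩) <;> exact ⟨by omega, htB⟩
  have h2 : Disjoint (B.filter (fun t => t < s)) (B.filter (fun t => s < t)) := by
    rw [Finset.disjoint_left]
    intro t ht1 ht2
    have := (Finset.mem_filter.mp ht1).2
    have := (Finset.mem_filter.mp ht2).2
    omega
  have h3 := Finset.card_erase_of_mem hs
  rw [h1, Finset.card_union_of_disjoint h2] at h3
  have : 1 ≤ B.card := Finset.card_pos.mpr ⟨s, hs⟩
  omega

lemma mem_EB {C : List (Finset ℕ)} {S : Finset ℕ} (hdiv : IsDivision C S) {i s : ℕ}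
    (hi : i < C.length) (hs : s ∈ C.getD i ∅) {u x : ℕ} (hu : u < C.length - 1)
    (hx : x ∈ EB C i s u) :
    ∃ k, k < C.length ∧ x ∈ C.getD k ∅ ∧ (k = u ∨ k = u + 1) ∧
      (k = u + 1 → i ≤ k) ∧ (k = u → k ≤ i) ∧
      (k = i → u + 1 = i → x < s) ∧ (k = i → u = i → s < x) := by
  unfold EB at hx
  split_ifs at hx with h1 h2 h3
  · exact ⟨u, by omega, hx, Or.inl rfl, by intro h; omega, by intro h; omega,
      by intro hk h; omega, by intro hk h; omega⟩
  · rcases Finset.mem_union.mp hx with hx' | hx'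
    · exact ⟨i - 1, by omega, hx', Or.inl (by omega), by intro h; omega, by intro h; omega,
        by intro hk h; omega, by intro hk h; omega⟩
    · obtain ⟨hxb, hxs⟩ := Finset.mem_filter.mp hx'
      exact ⟨i, hi, hxb, Or.inr (by omega), by intro h; omega, by intro h; omega,
        by intro _ _; exact hxs, by intro _ h; omega⟩
  · rcases Finset.mem_union.mp hx with hx' | hx'
    · obtain ⟨hxb, hxs⟩ := Finset.mem_filter.mp hx'
      exact ⟨i, hi, hxb, Or.inl (by omega), by intro h; omega, by intro h; omega,
        by intro _ h; omega, by intro _ _; exact hxs⟩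
    · exact ⟨i + 1, by omega, hx', Or.inr (by omega), by intro h; omega, by intro h; omega,
        by intro h; omega, by intro h; omega⟩
  · exact ⟨u + 1, by omega, hx, Or.inr rfl, by intro h; omega, by intro h; omega,
      by intro hk h; omega, by intro hk h; omega⟩

lemma deleteA_spec_s14 {C : List (Finset ℕ)} {S : Finset ℕ} (hdiv : IsDivision C S)
    (hn : 2 ≤ C.length) {i s : ℕ} (hi : i < C.length) (hs : s ∈ C.getD i ∅)
    (hadm : AdmissibleA C s) :
    (deleteA C s).length = C.length - 1 ∧
    IsDivision (deleteA C s) (S.erase s) ∧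
    (∀ j, j < C.length - 1 → ((deleteA C s).getD j ∅).card
      = dd (fun k => (C.getD k ∅).card) i (((C.getD i ∅).filter (fun t => t < s)).card) j) := by
  -- extract case facts from admissibility
  obtain ⟨i', hi', hsi', hcase⟩ := hadm
  have hii : i' = i := div_unique hdiv hi' hi hsi' hs
  subst hii
  have hmin : i' = 0 → ∀ t ∈ C.getD 0 ∅, s ≤ t := by
    intro h0
    rcases hcase with ⟨_, hm⟩ | ⟨hl, _⟩ | ⟨hp, _⟩
    · exact hm
    · omega
    · omega
  have hmax : i' = C.length - 1 → ∀ t ∈ C.getD i' ∅, t ≤ s := by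
    intro hl
    rcases hcase with ⟨h0, _⟩ | ⟨_, hm⟩ | ⟨hp, hq⟩
    · omega
    · exact hm
    · omega
  have hdesc : (deleteA C s).length = C.length - 1 ∧
      ∀ j, j < C.length - 1 → (deleteA C s).getD j ∅ = EB C i' s j := by
    rcases Nat.eq_zero_or_pos i' with h0 | hpos
    · subst h0
      exact deleteA_first hdiv hn hs
    · rcases Nat.lt_or_ge i' (C.length - 1) with hlast | hlast
      · exact deleteA_mid hdiv hpos (by omega) hs
      · exact deleteA_last hdiv hn (by omega) (by omega) hs
  obtain ⟨hlen, hgd⟩ := hdesc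
  -- disjointness of distinct blocks
  have hdisj : ∀ k k', k < C.length → k' < C.length → k ≠ k' →
      ∀ x, x ∈ C.getD k ∅ → x ∉ C.getD k' ∅ := by
    intro k k' hk hk' hne x hxk hxk'
    exact hne (div_unique hdiv hk hk' hxk hxk')
  refine ⟨hlen, ⟨?_, ?_, ?_⟩, ?_⟩
  · -- cover
    intro t ht
    obtain ⟨htS, htne⟩ : t ∈ S ∧ t ≠ s := by
      have := Finset.mem_erase.mp ht
      exact ⟨this.2, this.1⟩
    obtain ⟨k, hk, htk⟩ := hdiv.1 t htS
    rw [hlen]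
    by_cases hc1 : k + 1 < i'
    · exact ⟨k, by omega, by rw [hgd k (by omega)]; unfold EB; rw [if_pos hc1]; exact htk⟩
    by_cases hc2 : k + 1 = i'
    · refine ⟨k, by omega, ?_⟩
      rw [hgd k (by omega)]
      unfold EB
      rw [if_neg (by omega), if_pos hc2]
      exact Finset.mem_union_left _ (by rw [show i' - 1 = k by omega]; exact htk)
    by_cases hc3 : k = i'
    · subst hc3
      rcases Nat.lt_trichotomy t s with hts | hts | hts
      · -- t < s : goes into block i'-1 ; i' must be ≥ 1
        have hip : 1 ≤ k := by
          by_contra h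
          have := hmin (by omega) t (by rwa [show (0:ℕ) = k by omega])
          omega
        refine ⟨k - 1, by omega, ?_⟩
        rw [hgd (k-1) (by omega)]
        unfold EB
        rw [if_neg (by omega), if_pos (by omega)]
        exact Finset.mem_union_right _ (Finset.mem_filter.mpr ⟨htk, hts⟩)
      · omega
      · -- s < t : goes into block i' ; i' must be < len - 1
        have hip : k < C.length - 1 := by
          rcases Nat.lt_or_ge k (C.length - 1) with h | h
          · exact h
          · have := hmax (by omega) t htk
            omega
        refine ⟨k, by omega, ?_⟩
        rw [hgd k (by omega)]
        unfold EB
        rw [if_neg (by omega), if_neg (by omega), if_pos rfl]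
        exact Finset.mem_union_left _ (Finset.mem_filter.mpr ⟨htk, hts⟩)
    · -- k ≥ i' + 1
      have hk1 : i' + 1 ≤ k := by omega
      refine ⟨k - 1, by omega, ?_⟩
      rw [hgd (k-1) (by omega)]
      unfold EB
      by_cases he : k = i' + 1
      · rw [if_neg (by omega), if_neg (by omega), if_pos (by omega)]
        exact Finset.mem_union_right _ (by rw [show i' + 1 = k by omega]; exact htk)
      · rw [if_neg (by omega), if_neg (by omega), if_neg (by omega)]
        rw [show k - 1 + 1 = k by omega]
        exact htk
  · -- subset
    intro j hj x hx
    rw [hlen] at hj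
    rw [hgd j hj] at hx
    obtain ⟨k, hk, hxk, hor, himp1, himp2, hlt1, hlt2⟩ := mem_EB hdiv hi hs hj hx
    rw [Finset.mem_erase]
    constructor
    · intro hxs
      subst hxs
      have hki : k = i' := div_unique hdiv hk hi hxk hs
      rcases hor with h | h
      · have := hlt2 hki (by omega)
        omega
      · have := hlt1 hki (by omega)
        omega
    · exact hdiv.2.1 k hk hxk
  · -- ordering
    intro u v huv hv x hx y hy
    rw [hlen] at hv
    rw [hgd u (by omega)] at hx
    rw [hgd v hv] at hy
    obtain ⟨k1, hk1, hxk1, hor1, ha1, hb1, hc1, hd1⟩ := mem_EB hdiv hi hs (by omega) hx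
    obtain ⟨k2, hk2, hyk2, hor2, ha2, hb2, hc2, hd2⟩ := mem_EB hdiv hi hs hv hy
    rcases Nat.lt_or_ge k1 k2 with hkk | hkk
    · exact hdiv.2.2 k1 k2 hkk hk2 x hxk1 y hyk2
    · -- k1 = k2 forced, both = i', x < s < y
      have hk12 : k1 = k2 := by omega
      have he1 : k1 = u + 1 := by omega
      have he2 : k2 = v := by omega
      have hki : k1 = i' := by
        have := ha1 he1
        have := hb2 he2
        omega
      have hxs := hc1 hki (by omega)
      have hys := hd2 (by omega) (by omega)
      omega
  · -- cards
    intro j hj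
    rw [hgd j hj]
    unfold EB dd
    have hcv := card_filters (C.getD i' ∅) s hs
    split_ifs with h1 h2 h3
    · rfl
    · have hd2 : Disjoint (C.getD (i' - 1) ∅) ((C.getD i' ∅).filter (fun t => t < s)) := by
        rw [Finset.disjoint_left]
        intro t ht1 ht2
        have ht2' := (Finset.mem_filter.mp ht2).1
        exact hdisj (i'-1) i' (by omega) hi (by omega) t ht1 ht2'
      rw [Finset.card_union_of_disjoint hd2]
    · have hd3 : Disjoint ((C.getD i' ∅).filter (fun t => s < t)) (C.getD (i' + 1) ∅) := by
        rw [Finset.disjoint_left]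
        intro t ht1 ht2
        have ht1' := (Finset.mem_filter.mp ht1).1
        exact hdisj i' (i'+1) hi (by omega) (by omega) t ht1' ht2
      rw [Finset.card_union_of_disjoint hd3]
      have he : ((C.getD i' ∅).filter (fun t => s < t)).card
          = (C.getD i' ∅).card - 1 - ((C.getD i' ∅).filter (fun t => t < s)).card := by
        omega
      rw [he]
    · rfl

lemma div_card_sum {C : List (Finset ℕ)} {S : Finset ℕ} (hdiv : IsDivision C S) :
    S.card = ∑ j ∈ Finset.range C.length, (C.getD j ∅).card := by
  classical
  have hS : S = (Finset.range C.length).biUnion (fun j => C.getD j ∅) := by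
    ext t
    simp only [Finset.mem_biUnion, Finset.mem_range]
    constructor
    · intro ht
      obtain ⟨i, hi, hti⟩ := hdiv.1 t ht
      exact ⟨i, hi, hti⟩
    · rintro ⟨i, hi, hti⟩
      exact hdiv.2.1 i hi hti
  rw [hS]
  apply Finset.card_biUnion
  intro x hx y hy hxy
  show Disjoint (C.getD x ∅) (C.getD y ∅)
  rw [Finset.disjoint_left]
  intro t htx hty
  exact hxy (div_unique hdiv (Finset.mem_range.mp hx) (Finset.mem_range.mp hy) htx hty)

lemma sum_rank (A : Finset ℕ) (f : ℕ → ℕ) :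
    ∑ s ∈ A, f ((A.filter (fun t => t < s)).card) = ∑ a ∈ Finset.range A.card, f a := by
  classical
  set ρ : ℕ → ℕ := fun s => (A.filter (fun t => t < s)).card with hρ
  have hmono : ∀ x y, x ∈ A → x < y → ρ x < ρ y := by
    intro x y hx hxy
    apply Finset.card_lt_card
    have hsub : A.filter (fun t => t < x) ⊆ A.filter (fun t => t < y) := by
      intro t ht
      simp only [Finset.mem_filter] at ht ⊢
      exact ⟨ht.1, by omega⟩
    rw [Finset.ssubset_iff_of_subset hsub]
    exact ⟨x, Finset.mem_filter.mpr ⟨hx, hxy⟩, fun hmem =>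
      absurd (Finset.mem_filter.mp hmem).2 (lt_irrefl x)⟩
  have hinj : ∀ x ∈ A, ∀ y ∈ A, ρ x = ρ y → x = y := by
    intro x hx y hy hxy
    rcases Nat.lt_trichotomy x y with h | h | h
    · have := hmono x y hx h; omega
    · exact h
    · have := hmono y x hy h; omega
  have himg : A.image ρ = Finset.range A.card := by
    apply Finset.eq_of_subset_of_card_le
    · intro b hb
      obtain ⟨s, hsA, rfl⟩ := Finset.mem_image.mp hb
      rw [Finset.mem_range]
      apply Finset.card_lt_card
      rw [Finset.ssubset_iff_of_subset (Finset.filter_subset _ _)]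
      exact ⟨s, hsA, fun hmem => absurd (Finset.mem_filter.mp hmem).2 (lt_irrefl s)⟩
    · rw [Finset.card_range, Finset.card_image_of_injOn hinj]
  calc ∑ s ∈ A, f (ρ s) = ∑ b ∈ A.image ρ, f b := (Finset.sum_image hinj).symm
    _ = ∑ a ∈ Finset.range A.card, f a := by rw [himg]

lemma min_rank (A : Finset ℕ) (m : ℕ) (hm : m ∈ A) (hmin : ∀ t ∈ A, m ≤ t) :
    (A.filter (fun t => t < m)).card = 0 := by
  rw [Finset.card_eq_zero, Finset.filter_eq_empty_iff]
  intro t ht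
  have := hmin t ht
  omega

lemma max_rank (A : Finset ℕ) (m : ℕ) (hm : m ∈ A) (hmax : ∀ t ∈ A, t ≤ m) :
    (A.filter (fun t => t < m)).card = A.card - 1 := by
  have : A.filter (fun t => t < m) = A.erase m := by
    ext t
    simp only [Finset.mem_filter, Finset.mem_erase]
    constructor
    · rintro ⟨ht, h⟩
      exact ⟨by omega, ht⟩
    · rintro ⟨hne, ht⟩
      have := hmax t ht
      exact ⟨ht, by omega⟩
  rw [this, Finset.card_erase_of_mem hm]

lemma min_filter (B : Finset ℕ) (hB : B.Nonempty) :
    B.filter (fun s => ∀ t ∈ B, s ≤ t) = {B.min' hB} := by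
  ext x
  simp only [Finset.mem_filter, Finset.mem_singleton]
  constructor
  · rintro ⟨hx, hmin⟩
    exact le_antisymm (hmin _ (B.min'_mem hB)) (B.min'_le x hx)
  · rintro rfl
    exact ⟨B.min'_mem hB, fun t ht => B.min'_le t ht⟩

lemma max_filter (B : Finset ℕ) (hB : B.Nonempty) :
    B.filter (fun s => ∀ t ∈ B, t ≤ s) = {B.max' hB} := by
  ext x
  simp only [Finset.mem_filter, Finset.mem_singleton]
  constructor
  · rintro ⟨hx, hmax⟩
    exact le_antisymm (B.le_max' x hx) (hmax _ (B.max'_mem hB))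
  · rintro rfl
    exact ⟨B.max'_mem hB, fun t ht => B.le_max' t ht⟩

lemma my_card_sigma {ι : Type} [Fintype ι] (β : ι → Type) [∀ i, Finite (β i)] :
    Nat.card ((i : ι) × β i) = ∑ i : ι, Nat.card (β i) := by
  classical
  have : ∀ i, Fintype (β i) := fun i => Fintype.ofFinite _
  simp [Nat.card_eq_fintype_card, Fintype.card_sigma]

lemma card_step (C : List (Finset ℕ)) (S : Finset ℕ) [DecidablePred (AdmissibleA C)]
    (hdiv : IsDivision C S) (hS : S.Nonempty)
    (hfin : ∀ s ∈ S.filter (AdmissibleA C), Finite {w : List ℕ // IsCPermA (deleteA C s) w}) :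
    Nat.card {w : List ℕ // IsCPermA C w}
      = ∑ s ∈ S.filter (AdmissibleA C), Nat.card {w : List ℕ // IsCPermA (deleteA C s) w} := by
  classical
  have hne : ¬ (∀ B ∈ C, B = ∅) := by
    obtain ⟨t, ht⟩ := hS
    obtain ⟨i, hi, hti⟩ := hdiv.1 t ht
    intro hall
    have hmem : C.getD i ∅ ∈ C := by
      rw [List.getD_eq_getElem C ∅ hi]
      exact List.getElem_mem hi
    rw [hall _ hmem] at hti
    simp at hti
  have hmemS : ∀ s, AdmissibleA C s → s ∈ S := by
    intro s hs
    obtain ⟨i, hi, hsi, _⟩ := hs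
    exact hdiv.2.1 i hi hsi
  let g : ((s : {x // x ∈ S.filter (AdmissibleA C)}) ×
      {w : List ℕ // IsCPermA (deleteA C s.1) w}) → {w : List ℕ // IsCPermA C w} :=
    fun p => ⟨p.1.1 :: p.2.1, ⟨(Finset.mem_filter.mp p.1.2).2, p.2.2⟩⟩
  have hbij : Function.Bijective g := by
    constructor
    · rintro ⟨⟨s1, hs1⟩, ⟨w1, hw1⟩⟩ ⟨⟨s2, hs2⟩, ⟨w2, hw2⟩⟩ h
      simp only [g, Subtype.mk.injEq, List.cons.injEq] at h
      obtain ⟨rfl, rfl⟩ := h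
      rfl
    · rintro ⟨w, hw⟩
      rcases w with _ | ⟨s, w'⟩
      · exact absurd hw hne
      · obtain ⟨h1, h2⟩ := hw
        exact ⟨⟨⟨s, Finset.mem_filter.mpr ⟨hmemS s h1, h1⟩⟩, ⟨w', h2⟩⟩, rfl⟩
  haveI hf1 : ∀ (s : {x // x ∈ S.filter (AdmissibleA C)}),
      Finite {w : List ℕ // IsCPermA (deleteA C s.1) w} := fun s => hfin s.1 s.2
  rw [← Nat.card_eq_of_bijective g hbij]
  rw [my_card_sigma]
  exact Finset.sum_coe_sort (S.filter (AdmissibleA C))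
    (fun s => Nat.card {w : List ℕ // IsCPermA (deleteA C s) w})

lemma card_nil : Nat.card {w : List ℕ // IsCPermA [] w} = 1 := by
  rw [Nat.card_eq_one_iff_unique]
  constructor
  · constructor
    rintro ⟨w1, h1⟩ ⟨w2, h2⟩
    have e1 : w1 = [] := by
      cases w1 with
      | nil => rfl
      | cons s w' =>
        obtain ⟨⟨i, hi, _⟩, _⟩ := h1
        simp at hi
    have e2 : w2 = [] := by
      cases w2 with
      | nil => rfl
      | cons s w' =>
        obtain ⟨⟨i, hi, _⟩, _⟩ := h2
        simp at hi
    subst e1; subst e2; rfl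
  · exact ⟨⟨[], by intro B hB; simp at hB⟩⟩

theorem master : ∀ n : ℕ, ∀ (C : List (Finset ℕ)) (S : Finset ℕ) (r : ℕ),
    C.length = n → S.card = n → IsDivision C S → r ≤ n →
    (∀ u, u ≤ r → u ≤ ∑ j ∈ Finset.range u, (C.getD j ∅).card) →
    (∀ u, r ≤ u → u ≤ n → ∑ j ∈ Finset.range u, (C.getD j ∅).card ≤ u) →
    Nat.card {w : List ℕ // IsCPermA C w} = FF n r (fun j => (C.getD j ∅).card) := by
  intro n
  induction n using Nat.strong_induction_on with
  | _ n IH =>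
  intro C S r hlen hcard hdiv hrn H1 H2
  classical
  rcases Nat.eq_zero_or_pos n with hn0 | hn1
  · -- n = 0
    subst hn0
    have hC : C = [] := List.length_eq_zero_iff.mp hlen
    subst hC
    have hr0 : r = 0 := by omega
    subst hr0
    rw [card_nil]
    simp [FF]
  -- n ≥ 1
  set cv : ℕ → ℕ := fun j => (C.getD j ∅).card with hcv
  have hSne : S.Nonempty := Finset.card_pos.mp (by omega)
  have hsum : ∑ j ∈ Finset.range n, cv j = n := by
    have h := div_card_sum hdiv
    rw [hlen] at h
    rw [← h]
    exact hcard
  -- value of each branch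
  have hval : ∀ i s, i < n → s ∈ C.getD i ∅ → AdmissibleA C s →
      Nat.card {w : List ℕ // IsCPermA (deleteA C s) w}
        = FF (n-1) (if i < r then r - 1 else r)
            (dd cv i (((C.getD i ∅).filter (fun t => t < s)).card)) := by
    intro i s hi hs hadm
    have hsS : s ∈ S := hdiv.2.1 i (by omega) hs
    have ha : ((C.getD i ∅).filter (fun t => t < s)).card < cv i := by
      apply Finset.card_lt_card
      rw [Finset.ssubset_iff_of_subset (Finset.filter_subset _ _)]
      exact ⟨s, hs, fun hmem => absurd (Finset.mem_filter.mp hmem).2 (lt_irrefl s)⟩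
    have hia : i = 0 → ((C.getD i ∅).filter (fun t => t < s)).card = 0 := by
      intro h0
      rcases Nat.lt_or_ge n 2 with h1 | h1
      · -- n = 1 : block has one element
        have hcv1 : cv 0 = 1 := by
          have := hsum
          rw [show n = 1 by omega] at this
          simpa using this
        rw [h0] at ha ⊢
        omega
      · obtain ⟨i', hi', hsi', hcase⟩ := hadm
        have hii : i' = i := div_unique hdiv hi' (by omega) hsi' hs
        rw [hii, h0] at hcase hsi'
        rw [hlen] at hcase
        have hmin : ∀ t ∈ C.getD 0 ∅, s ≤ t := by
          rcases hcase with ⟨_, hm⟩ | ⟨hl, _⟩ | ⟨hp, _⟩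
          · exact hm
          · omega
          · omega
        rw [h0]
        exact min_rank _ s (by rw [h0] at hs; exact hs) hmin
    rcases Nat.lt_or_ge n 2 with hn2 | hn2
    · -- n = 1
      have hd : deleteA C s = [] := by
        simp only [deleteA]
        rw [if_pos (by omega)]
      rw [hd, card_nil]
      have hr01 : (if i < r then r - 1 else r) = 0 := by
        split_ifs <;> omega
      rw [hr01, show n - 1 = 0 by omega]
      simp [FF]
    · obtain ⟨hlen', hdiv', hcards'⟩ := deleteA_spec_s14 hdiv (by omega) (by omega) hs hadm
      have hcards'' : ∀ j, j < n - 1 → ((deleteA C s).getD j ∅).card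
          = dd cv i (((C.getD i ∅).filter (fun t => t < s)).card) j :=
        fun j hj => hcards' j (by rw [hlen]; exact hj)
      obtain ⟨hr', h1', h2'⟩ := hyp_dd n r cv i
        (((C.getD i ∅).filter (fun t => t < s)).card) (by omega) hrn hi ha hia H1 H2
      have hIH := IH (n-1) (by omega) (deleteA C s) (S.erase s) (if i < r then r - 1 else r)
        (by rw [hlen', hlen]) (by rw [Finset.card_erase_of_mem hsS, hcard]) hdiv' hr'
        (by
          intro u hu
          have h := h1' u hu
          rw [Finset.sum_congr rfl (fun j hj => hcards'' j
            (by have := Finset.mem_range.mp hj; omega))]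
          exact h)
        (by
          intro u hu1 hu2
          have h := h2' u hu1 hu2
          rw [Finset.sum_congr rfl (fun j hj => hcards'' j
            (by have := Finset.mem_range.mp hj; omega))]
          exact h)
      rw [hIH]
      exact FF_congr (n-1) _ _ _ (fun j hj => hcards'' j hj) hr'
  -- finiteness of fibers
  have hfin : ∀ s ∈ S.filter (AdmissibleA C), Finite {w : List ℕ // IsCPermA (deleteA C s) w} := by
    intro s hsA
    obtain ⟨hsS, hadm⟩ := Finset.mem_filter.mp hsA
    obtain ⟨i, hi, hsi, hrest⟩ := hadm
    have h := hval i s (by omega) hsi ⟨i, hi, hsi, hrest⟩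
    apply Nat.finite_of_card_ne_zero
    rw [h]
    have hpos := FF_pos (n-1) (if i < r then r - 1 else r)
      (dd cv i (((C.getD i ∅).filter (fun t => t < s)).card))
      (by rw [hlen] at hi; split_ifs <;> omega)
    omega
  rw [card_step C S hdiv hSne hfin]
  rcases Nat.lt_or_ge n 2 with hn2 | hn2
  · -- n = 1 directly
    have hn1' : n = 1 := by omega
    have hA : S.filter (AdmissibleA C) = S := by
      apply Finset.filter_true_of_mem
      intro s hsS
      obtain ⟨i, hi, hsi⟩ := hdiv.1 s hsS
      have hi0 : i = 0 := by omega
      refine ⟨0, by omega, by rw [hi0] at hsi; exact hsi, Or.inl ⟨rfl, ?_⟩⟩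
      intro t ht
      have htS : t ∈ S := hdiv.2.1 0 (by omega) ht
      obtain ⟨x, hx⟩ := Finset.card_eq_one.mp (by rw [hcard, hn1'])
      rw [hx] at hsS htS
      simp only [Finset.mem_singleton] at hsS htS
      omega
    rw [hA]
    obtain ⟨x, hx⟩ := Finset.card_eq_one.mp (by rw [hcard, hn1'])
    rw [hx, Finset.sum_singleton]
    have hd : deleteA C x = [] := by
      simp only [deleteA]
      rw [if_pos (by omega)]
    rw [hd, card_nil, hn1']
    rcases Nat.le_one_iff_eq_zero_or_eq_one.mp (show r ≤ 1 by omega) with h | h <;>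
      · subst h; simp [FF]
  -- n ≥ 2 : regroup and conclude with `num`
  have hAsplit : S.filter (AdmissibleA C) = (Finset.range n).biUnion
      (fun i => (C.getD i ∅).filter (AdmissibleA C)) := by
    ext s
    simp only [Finset.mem_filter, Finset.mem_biUnion, Finset.mem_range]
    constructor
    · rintro ⟨hsS, hadm⟩
      obtain ⟨i, hi, hsi, _⟩ := hadm
      refine ⟨i, by omega, hsi, ?_⟩
      exact ⟨i, hi, hsi, by assumption⟩
    · rintro ⟨i, hi, hsi, hadm⟩
      exact ⟨hdiv.2.1 i (by omega) hsi, hadm⟩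
  rw [hAsplit, Finset.sum_biUnion (by
    intro x hx y hy hxy
    simp only [Finset.coe_range, Set.mem_Iio] at hx hy
    simp only [Function.onFun]
    rw [Finset.disjoint_left]
    intro t htx hty
    exact hxy (div_unique hdiv (by rw [hlen]; exact hx)
      (by rw [hlen]; exact hy)
      (Finset.mem_filter.mp htx).1 (Finset.mem_filter.mp hty).1))]
  -- per-block sums
  have hb0 : ∑ s ∈ (C.getD 0 ∅).filter (AdmissibleA C),
        Nat.card {w : List ℕ // IsCPermA (deleteA C s) w}
      = (if cv 0 = 0 then 0 else FF (n-1) (if 0 < r then r - 1 else r) (dd cv 0 0)) := by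
    have hfeq : (C.getD 0 ∅).filter (AdmissibleA C)
        = (C.getD 0 ∅).filter (fun s => ∀ t ∈ C.getD 0 ∅, s ≤ t) := by
      apply Finset.filter_congr
      intro s hs
      constructor
      · rintro ⟨i', hi', hsi', hcase⟩
        have hii : i' = 0 := div_unique hdiv hi' (by omega) hsi' hs
        rw [hii] at hcase
        rw [hlen] at hcase
        rcases hcase with ⟨_, hm⟩ | ⟨hl, _⟩ | ⟨hp, _⟩
        · exact hm
        · omega
        · omega
      · intro hm
        exact ⟨0, by omega, hs, Or.inl ⟨rfl, hm⟩⟩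
    rw [hfeq]
    rcases Finset.eq_empty_or_nonempty (C.getD 0 ∅) with hB | hB
    · have hcv0 : cv 0 = 0 := by
        show (C.getD 0 ∅).card = 0
        rw [hB]
        rfl
      rw [hB, if_pos hcv0]
      simp
    · rw [min_filter _ hB, Finset.sum_singleton]
      have hmem := (C.getD 0 ∅).min'_mem hB
      have hminp : ∀ t ∈ C.getD 0 ∅, (C.getD 0 ∅).min' hB ≤ t :=
        fun t ht => (C.getD 0 ∅).min'_le t ht
      have hadm : AdmissibleA C ((C.getD 0 ∅).min' hB) := ⟨0, by omega, hmem, Or.inl ⟨rfl, hminp⟩⟩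
      have hne0 : ¬ cv 0 = 0 := by
        intro h
        exact absurd (Finset.card_eq_zero.mp h) (Finset.nonempty_iff_ne_empty.mp hB)
      rw [hval 0 _ (by omega) hmem hadm, min_rank _ _ hmem hminp, if_neg hne0]
  have hbl : ∑ s ∈ (C.getD (n-1) ∅).filter (AdmissibleA C),
        Nat.card {w : List ℕ // IsCPermA (deleteA C s) w}
      = (if cv (n-1) = 0 then 0 else
          FF (n-1) (if n - 1 < r then r - 1 else r) (dd cv (n-1) (cv (n-1) - 1))) := by
    have hfeq : (C.getD (n-1) ∅).filter (AdmissibleA C)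
        = (C.getD (n-1) ∅).filter (fun s => ∀ t ∈ C.getD (n-1) ∅, t ≤ s) := by
      convert Finset.filter_congr (p := AdmissibleA C) (q := fun s => ∀ t ∈ C.getD (n-1) ∅, t ≤ s) (s := C.getD (n-1) ∅) ?_
      intro s hs
      constructor
      · rintro ⟨i', hi', hsi', hcase⟩
        have hii : i' = n - 1 := div_unique hdiv hi' (by omega) hsi' hs
        rw [hii] at hcase hsi'
        rw [hlen] at hcase
        rcases hcase with ⟨h0, _⟩ | ⟨_, hm⟩ | ⟨hp, hq⟩
        · omega
        · exact hm
        · omega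
      · intro hm
        refine ⟨n-1, by omega, hs, Or.inr (Or.inl ⟨by omega, hm⟩)⟩
    rw [hfeq]
    rcases Finset.eq_empty_or_nonempty (C.getD (n-1) ∅) with hB | hB
    · have hcv0 : cv (n-1) = 0 := by
        show (C.getD (n-1) ∅).card = 0
        rw [hB]
        rfl
      rw [hB, if_pos hcv0]
      simp
    · rw [show (C.getD (n-1) ∅).filter (fun s => ∀ t ∈ C.getD (n-1) ∅, t ≤ s) = {(C.getD (n-1) ∅).max' hB} by convert max_filter _ hB, Finset.sum_singleton]
      have hmem := (C.getD (n-1) ∅).max'_mem hB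
      have hmaxp : ∀ t ∈ C.getD (n-1) ∅, t ≤ (C.getD (n-1) ∅).max' hB :=
        fun t ht => (C.getD (n-1) ∅).le_max' t ht
      have hadm : AdmissibleA C ((C.getD (n-1) ∅).max' hB) :=
        ⟨n-1, by omega, hmem, Or.inr (Or.inl ⟨by omega, hmaxp⟩)⟩
      have hne0 : ¬ cv (n-1) = 0 := by
        intro h
        exact absurd (Finset.card_eq_zero.mp h) (Finset.nonempty_iff_ne_empty.mp hB)
      rw [hval (n-1) _ (by omega) hmem hadm, max_rank _ _ hmem hmaxp, if_neg hne0]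
  have hbm : ∀ i, 0 < i → i < n - 1 →
      ∑ s ∈ (C.getD i ∅).filter (AdmissibleA C),
        Nat.card {w : List ℕ // IsCPermA (deleteA C s) w}
      = ∑ a ∈ Finset.range (cv i), FF (n-1) (if i < r then r - 1 else r) (dd cv i a) := by
    intro i hi1 hi2
    have hfeq : (C.getD i ∅).filter (AdmissibleA C) = C.getD i ∅ := by
      apply Finset.filter_true_of_mem
      intro s hs
      exact ⟨i, by omega, hs, Or.inr (Or.inr ⟨hi1, by omega⟩)⟩
    rw [hfeq]
    rw [Finset.sum_congr rfl (fun s hs => hval i s (by omega) hs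
      ⟨i, by omega, hs, Or.inr (Or.inr ⟨hi1, by omega⟩)⟩)]
    exact sum_rank (C.getD i ∅) (fun a => FF (n-1) (if i < r then r - 1 else r) (dd cv i a))
  -- split the range
  rw [Finset.range_eq_Ico, Finset.sum_eq_sum_Ico_succ_bot (by omega : 0 < n)]
  rw [show Finset.Ico 1 n = Finset.Ico 1 ((n-1)+1) by congr 1; omega]
  rw [Finset.sum_Ico_succ_top (by omega : 1 ≤ n - 1)]
  rw [hb0, hbl]
  rw [Finset.sum_congr (show Finset.Ico 1 (n-1) = Finset.Ioo 0 (n-1) by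
      ext x; simp only [Finset.mem_Ico, Finset.mem_Ioo]; omega)
    (fun i hi => hbm i (by have := Finset.mem_Ioo.mp hi; omega)
      (by have := Finset.mem_Ioo.mp hi; omega))]
  rw [← add_assoc]
  exact num n r cv hn2 hrn H1 H2 hsum

end

/-- hybrid formula: if `(c₁,…,c_r)` is superdiagonal and
`(c_{r+1},…,c_n)` is subdiagonal, the number of `C`-permutations is
`C(n, c₁+⋯+c_r) · 1^{c₁}⋯r^{c_r} · 1^{c_n}⋯(n-r)^{c_{r+1}}`. -/
theorem cperm_hybrid (n r : ℕ) (c : ℕ → ℕ) (hr : r ≤ n)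
    (hsum : ∑ i ∈ Finset.range n, c i = n)
    (hsuper : ∀ i, 1 ≤ i → i ≤ r → i ≤ ∑ j ∈ Finset.range i, c j)
    (hsub : ∀ i, 1 ≤ i → i ≤ n - r → i ≤ ∑ j ∈ Finset.range i, c (n - 1 - j))
    (C : List (Finset ℕ)) (hlen : C.length = n)
    (hC : IsDivision C (Finset.Icc 1 n))
    (hcard : ∀ i, i < n → (C.getD i ∅).card = c i) :
    Nat.card {w : List ℕ // IsCPermA C w} =
      Nat.choose n (∑ j ∈ Finset.range r, c j) *
        (∏ i ∈ Finset.range r, (i + 1) ^ c i) *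
        (∏ i ∈ Finset.range (n - r), (i + 1) ^ c (n - 1 - i)) := by
  have hScard : (Finset.Icc 1 n).card = n := by
    rw [Nat.card_Icc]
    omega
  have hsum_eq : ∀ u, u ≤ n →
      ∑ j ∈ Finset.range u, (C.getD j ∅).card = ∑ j ∈ Finset.range u, c j := by
    intro u hu
    apply Finset.sum_congr rfl
    intro j hj
    exact hcard j (by have := Finset.mem_range.mp hj; omega)
  have hsuffix : ∀ m, m ≤ n →
      ∑ j ∈ Finset.range m, c (n - 1 - j) = ∑ k ∈ Finset.Ico (n - m) n, c k := by
    intro m hm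
    rw [Finset.range_eq_Ico]
    apply Finset.sum_nbij' (i := fun j => n - 1 - j) (j := fun k => n - 1 - k)
    · intro a ha
      have := Finset.mem_Ico.mp ha
      rw [Finset.mem_Ico]
      omega
    · intro a ha
      have := Finset.mem_Ico.mp ha
      rw [Finset.mem_Ico]
      omega
    · intro a ha
      have := Finset.mem_Ico.mp ha
      omega
    · intro a ha
      have := Finset.mem_Ico.mp ha
      omega
    · intro a ha
      rfl
  have H1 : ∀ u, u ≤ r → u ≤ ∑ j ∈ Finset.range u, (C.getD j ∅).card := by
    intro u hu
    rw [hsum_eq u (by omega)]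
    rcases Nat.eq_zero_or_pos u with h | h
    · omega
    · exact hsuper u h hu
  have H2 : ∀ u, r ≤ u → u ≤ n → ∑ j ∈ Finset.range u, (C.getD j ∅).card ≤ u := by
    intro u hu1 hu2
    rw [hsum_eq u hu2]
    rcases Nat.eq_or_lt_of_le hu2 with h | h
    · rw [h, hsum]
    · have hm := hsub (n - u) (by omega) (by omega)
      rw [hsuffix (n - u) (by omega)] at hm
      rw [show n - (n - u) = u by omega] at hm
      have hsplit : ∑ j ∈ Finset.range u, c j + ∑ k ∈ Finset.Ico u n, c k = n := by
        rw [Finset.range_eq_Ico, Finset.sum_Ico_consecutive _ (by omega : 0 ≤ u) (by omega : u ≤ n)]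
        rw [← Finset.range_eq_Ico]
        exact hsum
      omega
  have hmaster := master n C (Finset.Icc 1 n) r hlen hScard hC hr H1 H2
  rw [hmaster]
  have hsr : ∑ j ∈ Finset.range r, c j = r := by
    have h1 := H1 r le_rfl
    have h2 := H2 r le_rfl hr
    have h3 := hsum_eq r hr
    omega
  rw [hsr]
  unfold FF
  congr 1
  · congr 1
    apply Finset.prod_congr rfl
    intro k hk
    have := Finset.mem_range.mp hk
    rw [show (fun j => (C.getD j ∅).card) k = c k from hcard k (by omega)]
  · apply Finset.prod_congr rfl
    intro k hk
    have := Finset.mem_range.mp hk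
    rw [show (fun j => (C.getD j ∅).card) (n - 1 - k) = c (n - 1 - k) from hcard _ (by omega)]


end MixedEulerian
end
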